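/- arXiv:1906.08518 — 4 statements merged into one kernel-verified Lean document; each statement's English description precedes it below -/
import Mathlib

section
/- (Waldschmidt's upper bound) Let S be a nonempty finite set of distinct points in ℂⁿ and let |S| denote its cardinality. For every positive integer l one has Ω(S,l) ≤ (l + n − 1)·|S|^{1/n} − (n − 1). -/
open MvPolynomial Filter

/-- The iterated partial derivative `∂^α` acting on polynomials in `n` variables. -/
noncomputable def iterPDeriv (n : ℕ) (α : Fin n → ℕ) :
    Module.End ℂ (MvPolynomial (Fin n) ℂ) :=
  (List.finRange n).foldl
    (fun L i => ((MvPolynomial.pderiv i).toLinearMap ^ α i) * L) 1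

/-- `ord(P,p) ≥ l`: all partial derivatives of `P` of total order `< l` vanish at `p`. -/
def HasOrderAtLeast {n : ℕ} (P : MvPolynomial (Fin n) ℂ) (p : Fin n → ℂ) (l : ℕ) : Prop :=
  ∀ α : Fin n → ℕ, (∑ i, α i) < l → MvPolynomial.eval p (iterPDeriv n α P) = 0

/-- `Ω(S,l)`: minimal degree of a nonzero polynomial vanishing to order `≥ l` at each point of `S`. -/
noncomputable def Omega {n : ℕ} (S : Finset (Fin n → ℂ)) (l : ℕ) : ℕ :=
  sInf {d | ∃ P : MvPolynomial (Fin n) ℂ,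
    P ≠ 0 ∧ (∀ p ∈ S, HasOrderAtLeast P p l) ∧ P.totalDegree = d}


/-- The singular degree `Ω(S) := inf_{l ≥ 1} Ω(S,l)/l`. -/
noncomputable def singDeg {n : ℕ} (S : Finset (Fin n → ℂ)) : ℝ :=
  ⨅ l : ℕ+, (Omega S (l : ℕ) : ℝ) / (l : ℕ)

/-! ### Auxiliary counting lemmas (stars and bars) -/

/-- Adding a slack variable: tuples with sum `≤ d` correspond to longer tuples with sum `= d`. -/
def equivSlack (n d : ℕ) :
    {f : Fin n → ℕ // ∑ i, f i ≤ d} ≃ {g : Fin (n + 1) → ℕ // ∑ i, g i = d} where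
  toFun f := ⟨Fin.cons (d - ∑ i, f.1 i) f.1, by
    rw [Fin.sum_univ_succ]
    simp only [Fin.cons_zero, Fin.cons_succ]
    exact Nat.sub_add_cancel f.2⟩
  invFun g := ⟨Fin.tail g.1, by
    have h := g.2
    rw [Fin.sum_univ_succ] at h
    simp only [Fin.tail]
    omega⟩
  left_inv f := by
    ext i
    simp [Fin.tail]
  right_inv g := Subtype.ext (by
    show Fin.cons (d - ∑ i, Fin.tail g.1 i) (Fin.tail g.1) = g.1
    have h := g.2
    rw [Fin.sum_univ_succ] at h
    have h0 : d - ∑ i, Fin.tail g.1 i = g.1 0 := by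
      simp only [Fin.tail]; omega
    rw [h0, Fin.cons_self_tail])

/-- Tuples with sum `= d` correspond to multisets of size `d` (stars and bars). -/
noncomputable def equivSym (m d : ℕ) :
    {g : Fin m → ℕ // ∑ i, g i = d} ≃ Sym (Fin m) d :=
  ((Multiset.toFinsupp.toEquiv.trans
      (Finsupp.equivFunOnFinite (α := Fin m) (M := ℕ))).subtypeEquiv (fun s => by
    have key : Multiset.card s
        = ∑ i, ((Multiset.toFinsupp.toEquiv.trans
            (Finsupp.equivFunOnFinite (α := Fin m) (M := ℕ))) s) i := by
      rw [← Multiset.toFinsupp_sum_eq s, Finsupp.sum_fintype _ _ (fun _ => rfl)]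
      rfl
    rw [key])).symm

noncomputable instance fintypeSumLE (n d : ℕ) : Fintype {f : Fin n → ℕ // ∑ i, f i ≤ d} :=
  Fintype.ofEquiv _ ((equivSlack n d).trans (equivSym (n + 1) d)).symm

lemma card_sumLE (n d : ℕ) :
    Fintype.card {f : Fin n → ℕ // ∑ i, f i ≤ d} = (d + n).choose n := by
  rw [Fintype.card_congr ((equivSlack n d).trans (equivSym (n + 1) d)),
    Sym.card_sym_eq_choose, Fintype.card_fin]
  have h1 : n + 1 + d - 1 = d + n := by omega
  have h2 := Nat.choose_symm (Nat.le_add_left n d)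
  rw [Nat.add_sub_cancel] at h2
  rw [h1, ← h2]

/-- `aeval` agrees with `eval` over `ℂ`. -/
lemma aeval_eq_eval' {n : ℕ} (p : Fin n → ℂ) (P : MvPolynomial (Fin n) ℂ) :
    aeval p P = eval p P := by
  rw [aeval_def, Algebra.algebraMap_self]; rfl

lemma ascFactorial_eq_prod (a k : ℕ) :
    a.ascFactorial k = ∏ i ∈ Finset.range k, (a + i) := by
  induction k with
  | zero => simp
  | succ k ih => rw [Nat.ascFactorial_succ, Finset.prod_range_succ, ih, Nat.mul_comm]

/-! ### Existence of a low-degree polynomial with many zeros (dimension count) -/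

lemma exists_poly {n : ℕ} (l d : ℕ) (S : Finset (Fin n → ℂ))
    (h : S.card * ((l - 1) + n).choose n < (d + n).choose n) :
    ∃ P : MvPolynomial (Fin n) ℂ,
      P ≠ 0 ∧ (∀ p ∈ S, HasOrderAtLeast P p l) ∧ P.totalDegree ≤ d := by
  classical
  set V := restrictTotalDegree (Fin n) ℂ d with hV
  -- the index set for a basis of V
  have B : Module.Basis {s : Fin n →₀ ℕ | (s.sum fun _ e => e) ≤ d} ℂ V :=
    basisRestrictSupport ℂ _
  have eD : {s : Fin n →₀ ℕ | (s.sum fun _ e => e) ≤ d} ≃ {f : Fin n → ℕ // ∑ i, f i ≤ d} :=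
    (Finsupp.equivFunOnFinite (α := Fin n) (M := ℕ)).subtypeEquiv (fun s => by
      have hsum : (s.sum fun _ e => e) = ∑ i, s i :=
        Finsupp.sum_fintype _ _ (fun _ => rfl)
      rw [Set.mem_setOf_eq, hsum]
      rfl)
  haveI : Fintype {s : Fin n →₀ ℕ | (s.sum fun _ e => e) ≤ d} := Fintype.ofEquiv _ eD.symm
  have hVrank : Module.finrank ℂ V = (d + n).choose n := by
    rw [Module.finrank_eq_card_basis B, Fintype.card_congr eD, card_sumLE]
  -- the linear map of conditions
  have hWrank : Module.finrank ℂ ((↥S × {f : Fin n → ℕ // ∑ i, f i ≤ l - 1}) → ℂ)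
      = S.card * ((l - 1) + n).choose n := by
    rw [Module.finrank_pi, Fintype.card_prod, Fintype.card_coe, card_sumLE]
  let Φ : V →ₗ[ℂ] ((↥S × {f : Fin n → ℕ // ∑ i, f i ≤ l - 1}) → ℂ) :=
    LinearMap.pi fun q =>
      ((aeval (R := ℂ) (q.1 : Fin n → ℂ)).toLinearMap.comp (iterPDeriv n q.2.1)).comp V.subtype
  have hΦ : ¬ Function.Injective Φ := by
    intro hinj
    have hle := LinearMap.finrank_le_finrank_of_injective hinj
    rw [hVrank, hWrank] at hle
    exact Nat.lt_irrefl _ (h.trans_le hle)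
  rw [← LinearMap.ker_eq_bot] at hΦ
  obtain ⟨x, hxker, hx0⟩ := (Submodule.ne_bot_iff _).mp hΦ
  refine ⟨(x : MvPolynomial (Fin n) ℂ), ?_, ?_, ?_⟩
  · exact fun h0 => hx0 (Subtype.ext h0)
  · intro p hp α hα
    have hmem : (∑ i, α i) ≤ l - 1 := Nat.le_sub_one_of_lt hα
    have hq := congrFun (LinearMap.mem_ker.mp hxker) (⟨p, hp⟩, ⟨α, hmem⟩)
    simp only [Φ, LinearMap.pi_apply, LinearMap.comp_apply, Pi.zero_apply,
      AlgHom.toLinearMap_apply, Submodule.coe_subtype] at hq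
    rw [aeval_eq_eval'] at hq
    exact hq
  · exact (mem_restrictTotalDegree _ _ _).mp x.2

theorem waldschmidt_upper_bound {n : ℕ} (hn : 0 < n) (S : Finset (Fin n → ℂ)) (hS : S.Nonempty)
    (l : ℕ) (hl : 0 < l) :
    (Omega S l : ℝ) ≤ ((l : ℝ) + n - 1) * (S.card : ℝ) ^ ((n : ℝ)⁻¹) - ((n : ℝ) - 1) := by
  classical
  set s : ℕ := S.card with hs
  have hs1 : 1 ≤ s := hS.card_pos
  set t : ℝ := (s : ℝ) ^ ((n : ℝ)⁻¹) with ht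
  have ht1 : (1 : ℝ) ≤ t := Real.one_le_rpow (by exact_mod_cast hs1) (by positivity)
  set x : ℝ := ((l : ℝ) + n - 1) * t with hx
  have hl1 : (1 : ℝ) ≤ (l : ℝ) := by exact_mod_cast hl
  have hn1 : (1 : ℝ) ≤ (n : ℝ) := by exact_mod_cast hn
  have hln : (n : ℝ) ≤ (l : ℝ) + n - 1 := by linarith
  have hxn : (n : ℝ) ≤ x := by
    calc (n : ℝ) ≤ (l : ℝ) + n - 1 := hln
    _ = ((l : ℝ) + n - 1) * 1 := by ring
    _ ≤ ((l : ℝ) + n - 1) * t := by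
        apply mul_le_mul_of_nonneg_left ht1; linarith
  have hfl : n ≤ ⌊x⌋₊ := Nat.le_floor hxn
  set d : ℕ := ⌊x⌋₊ - (n - 1) with hd
  have hdcast : (d : ℝ) = (⌊x⌋₊ : ℝ) - ((n : ℝ) - 1) := by
    have h1 : n - 1 ≤ ⌊x⌋₊ := by omega
    rw [hd, Nat.cast_sub h1, Nat.cast_pred hn]
  have hfloor : (x : ℝ) - 1 < (⌊x⌋₊ : ℝ) := Nat.sub_one_lt_floor x
  -- key counting inequality
  have hkey : s * ((l - 1) + n).choose n < (d + n).choose n := by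
    have hts : t ^ n = (s : ℝ) := by
      rw [ht, ← Real.rpow_natCast ((s : ℝ) ^ ((n : ℝ)⁻¹)) n,
        ← Real.rpow_mul (by positivity),
        inv_mul_cancel₀ (by exact_mod_cast hn.ne' : (n : ℝ) ≠ 0), Real.rpow_one]
    have hprod : (s : ℝ) * ∏ i ∈ Finset.range n, ((l : ℝ) + i)
        < ∏ i ∈ Finset.range n, ((d : ℝ) + 1 + i) := by
      have hrw : (s : ℝ) * ∏ i ∈ Finset.range n, ((l : ℝ) + i)
          = ∏ i ∈ Finset.range n, (((l : ℝ) + i) * t) := by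
        rw [Finset.prod_mul_distrib, Finset.prod_const, Finset.card_range, hts]
        ring
      rw [hrw]
      apply Finset.prod_lt_prod_of_nonempty
      · intro i _
        have : (0 : ℝ) ≤ i := by positivity
        nlinarith
      · intro i hi
        have hi' : (i : ℝ) ≤ (n : ℝ) - 1 := by
          have : i + 1 ≤ n := Finset.mem_range.mp hi
          have : ((i : ℕ) : ℝ) + 1 ≤ (n : ℝ) := by exact_mod_cast this
          linarith
        have expand : x = ((l : ℝ) + i) * t + ((n : ℝ) - 1 - i) * t := by
          rw [hx]; ring
        have hmul : ((n : ℝ) - 1 - i) ≤ ((n : ℝ) - 1 - i) * t :=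
          le_mul_of_one_le_right (by linarith) ht1
        -- (d : ℝ) = ⌊x⌋ - (n - 1)  and  x - 1 < ⌊x⌋
        have hxd : x < (d : ℝ) + (n : ℝ) := by rw [hdcast]; linarith
        linarith
      · exact ⟨0, Finset.mem_range.mpr hn⟩
    have hcast : ((s * l.ascFactorial n : ℕ) : ℝ) < (((d + 1).ascFactorial n : ℕ) : ℝ) := by
      push_cast [ascFactorial_eq_prod]
      exact hprod
    have hasc : s * l.ascFactorial n < (d + 1).ascFactorial n := by exact_mod_cast hcast
    have h1 : (d + 1).ascFactorial n = n.factorial * (d + n).choose n :=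
      Nat.ascFactorial_eq_factorial_mul_choose d n
    have h2 : l.ascFactorial n = n.factorial * ((l - 1) + n).choose n := by
      have := Nat.ascFactorial_eq_factorial_mul_choose (l - 1) n
      rwa [show l - 1 + 1 = l by omega] at this
    rw [h1, h2, mul_left_comm] at hasc
    exact Nat.lt_of_mul_lt_mul_left hasc
  obtain ⟨P, hP0, hPord, hPdeg⟩ := exists_poly l d S hkey
  have hΩ : Omega S l ≤ d :=
    le_trans (Nat.sInf_le ⟨P, hP0, hPord, rfl⟩) hPdeg
  have hΩr : (Omega S l : ℝ) ≤ (d : ℝ) := by exact_mod_cast hΩ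
  refine hΩr.trans ?_
  rw [hdcast]
  have hfloorle : (⌊x⌋₊ : ℝ) ≤ x := Nat.floor_le (le_trans (by positivity) hxn)
  linarith
end

section
/- Let Q ∈ ℂ[z₁,…,zₙ] be a nonzero polynomial and let 0 < ϱ ≤ R. Then ln‖Q‖_ϱ − ln‖Q‖_R ≥ (deg Q)·ln(ϱ/R); equivalently ‖Q‖_R ≤ (R/ϱ)^{deg Q}·‖Q‖_ϱ. -/
open MvPolynomial

/-- The sup-norm `‖Q‖_ϱ` of a polynomial on the closed Euclidean ball `B̄(0,ϱ)` in `ℂⁿ`. -/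
noncomputable def polyNorm {n : ℕ} (Q : MvPolynomial (Fin n) ℂ) (ϱ : ℝ) : ℝ :=
  sSup ((fun z : EuclideanSpace ℂ (Fin n) =>
    ‖MvPolynomial.eval (fun i => z i) Q‖) '' Metric.closedBall 0 ϱ)

/-- Restricting an `MvPolynomial` to a complex line through the origin. -/
lemma polyNorm_aux_line {n : ℕ} (Q : MvPolynomial (Fin n) ℂ) (z : Fin n → ℂ) (t : ℂ) :
    Polynomial.eval t (MvPolynomial.aeval (fun i => Polynomial.C (z i) * Polynomial.X) Q)
      = MvPolynomial.eval (fun i => t * z i) Q := by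
  induction Q using MvPolynomial.induction_on with
  | C a => simp
  | add p q hp hq => simp [hp, hq]
  | mul_X p i hp =>
      simp only [map_mul, MvPolynomial.aeval_X, Polynomial.eval_mul, hp,
        MvPolynomial.eval_mul, MvPolynomial.eval_X, Polynomial.eval_C, Polynomial.eval_X]
      ring

/-- Continuity of the evaluation map on Euclidean space. -/
lemma polyNorm_aux_cont {n : ℕ} (Q : MvPolynomial (Fin n) ℂ) :
    Continuous fun z : EuclideanSpace ℂ (Fin n) =>
      ‖MvPolynomial.eval (fun i => z i) Q‖ := by
  have h1 : Continuous fun z : EuclideanSpace ℂ (Fin n) => (fun i => z i : Fin n → ℂ) := by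
    apply continuous_pi
    intro i
    exact (continuous_apply i).comp (PiLp.continuous_ofLp 2 (fun _ : Fin n => ℂ))
  have h2 : Continuous fun x : Fin n → ℂ => MvPolynomial.eval x Q :=
    MvPolynomial.continuous_eval Q
  exact continuous_norm.comp (h2.comp h1)

lemma polyNorm_aux_bdd {n : ℕ} (Q : MvPolynomial (Fin n) ℂ) (ϱ : ℝ) :
    BddAbove ((fun z : EuclideanSpace ℂ (Fin n) =>
      ‖MvPolynomial.eval (fun i => z i) Q‖) '' Metric.closedBall 0 ϱ) :=
  ((isCompact_closedBall _ _).image (polyNorm_aux_cont Q)).bddAbove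

/-- Core one-variable maximum-modulus estimate. -/
lemma polyNorm_aux_onevar (p : Polynomial ℂ) (D : ℕ) (hD : p.natDegree ≤ D)
    (r : ℝ) (hr : 0 < r) (hr1 : r ≤ 1) (M : ℝ)
    (hM : ∀ t : ℂ, ‖t‖ ≤ r → ‖p.eval t‖ ≤ M) :
    ‖p.eval 1‖ ≤ M / r ^ D := by
  set q := p.reflect D with hq
  have key : ∀ s : ℂ, s ≠ 0 → q.eval s * (s⁻¹) ^ D = p.eval s⁻¹ := by
    intro s hs
    have hinv : Invertible (s⁻¹ : ℂ) := invertibleOfNonzero (inv_ne_zero hs)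
    have h := Polynomial.eval₂_reflect_mul_pow (RingHom.id ℂ) (s⁻¹) D p hD
    have hiv : (⅟(s⁻¹ : ℂ)) = s := by rw [invOf_eq_inv, inv_inv]
    rw [hiv] at h
    exact h
  have hrinv : (0:ℝ) < r⁻¹ := by positivity
  have hbound : ∀ s ∈ frontier (Metric.ball (0:ℂ) r⁻¹), ‖q.eval s‖ ≤ M / r ^ D := by
    intro s hs
    rw [frontier_ball (0:ℂ) (ne_of_gt hrinv)] at hs
    have hns : ‖s‖ = r⁻¹ := by simpa using hs
    have hs0 : s ≠ 0 := by
      intro h; rw [h] at hns; simp at hns; exact (ne_of_gt hr) hns.symm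
    have h1 : ‖s⁻¹‖ ≤ r := by
      rw [norm_inv, hns, inv_inv]
    have h2 : ‖p.eval s⁻¹‖ ≤ M := hM _ h1
    have h3 : q.eval s = p.eval s⁻¹ * s ^ D := by
      have := key s hs0
      rw [← this, mul_assoc, ← mul_pow, inv_mul_cancel₀ hs0, one_pow, mul_one]
    rw [h3]
    rw [norm_mul, norm_pow, hns]
    rw [div_eq_mul_inv, ← inv_pow]
    exact mul_le_mul_of_nonneg_right h2 (by positivity)
  have hmem : (1:ℂ) ∈ closure (Metric.ball (0:ℂ) r⁻¹) := by
    rw [closure_ball (0:ℂ) (ne_of_gt hrinv)]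
    simp only [Metric.mem_closedBall, dist_zero_right, norm_one]
    exact le_inv_of_le_inv₀ hr (by simpa using hr1)
  have hmax := Complex.norm_le_of_forall_mem_frontier_norm_le
    (Metric.isBounded_ball) (q.differentiable.diffContOnCl) hbound hmem
  have h1 : q.eval 1 = p.eval 1 := by simpa using key 1 one_ne_zero
  rw [← h1]
  exact hmax

/-- Pointwise growth bound. -/
lemma polyNorm_aux_pt {n : ℕ} (Q : MvPolynomial (Fin n) ℂ) (ϱ R : ℝ) (hϱ : 0 < ϱ)
    (hϱR : ϱ ≤ R) (z : EuclideanSpace ℂ (Fin n)) (hz : ‖z‖ ≤ R) :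
    ‖MvPolynomial.eval (fun i => z i) Q‖
      ≤ polyNorm Q ϱ / (ϱ / R) ^ Q.totalDegree := by
  have hR : (0:ℝ) < R := lt_of_lt_of_le hϱ hϱR
  set p := MvPolynomial.aeval (fun i => Polynomial.C (z i) * Polynomial.X) Q with hp
  have hD : p.natDegree ≤ Q.totalDegree := by
    have := MvPolynomial.aeval_natDegree_le Q le_rfl
      (fun i => Polynomial.C (z i) * Polynomial.X) (fun i => by
        apply (Polynomial.natDegree_C_mul_le _ _).trans Polynomial.natDegree_X_le)
    simpa using this
  have hr : (0:ℝ) < ϱ / R := by positivity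
  have hr1 : ϱ / R ≤ 1 := (div_le_one hR).mpr hϱR
  have hM : ∀ t : ℂ, ‖t‖ ≤ ϱ / R →
      ‖p.eval t‖ ≤ polyNorm Q ϱ := by
    intro t ht
    rw [hp, polyNorm_aux_line]
    have hmem : t • z ∈ Metric.closedBall (0 : EuclideanSpace ℂ (Fin n)) ϱ := by
      rw [Metric.mem_closedBall, dist_zero_right, norm_smul]
      calc ‖t‖ * ‖z‖ ≤ (ϱ / R) * R := by
            apply mul_le_mul _ hz (norm_nonneg z) (le_of_lt hr)
            simpa using ht
        _ = ϱ := by field_simp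
    have heq : (fun i => t * z i) = fun i => (t • z) i := by
      funext i; rfl
    rw [heq]
    exact le_csSup (polyNorm_aux_bdd Q ϱ) ⟨t • z, hmem, rfl⟩
  have h1 : ‖p.eval 1‖ ≤ polyNorm Q ϱ / (ϱ / R) ^ Q.totalDegree :=
    polyNorm_aux_onevar p Q.totalDegree hD (ϱ / R) hr hr1 (polyNorm Q ϱ) hM
  have h2 : p.eval 1 = MvPolynomial.eval (fun i => z i) Q := by
    rw [hp, polyNorm_aux_line]; simp
  rwa [h2] at h1

/-- Positivity of the sup norm of a nonzero polynomial. -/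
lemma polyNorm_aux_pos {n : ℕ} (Q : MvPolynomial (Fin n) ℂ) (hQ : Q ≠ 0)
    (ϱ ρ' : ℝ) (hϱ : 0 < ϱ) (hle : ϱ ≤ ρ') : 0 < polyNorm Q ρ' := by
  -- find a point in the ball of radius ϱ where Q does not vanish
  by_cases hex : ∃ z ∈ Metric.closedBall (0 : EuclideanSpace ℂ (Fin n)) ϱ,
      MvPolynomial.eval (fun i => z i) Q ≠ 0
  · obtain ⟨z, hz, hz0⟩ := hex
    have hz' : z ∈ Metric.closedBall (0 : EuclideanSpace ℂ (Fin n)) ρ' :=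
      Metric.closedBall_subset_closedBall hle hz
    calc (0:ℝ) < ‖MvPolynomial.eval (fun i => z i) Q‖ := by
          simpa using hz0
      _ ≤ polyNorm Q ρ' := le_csSup (polyNorm_aux_bdd Q ρ') ⟨z, hz', rfl⟩
  · exfalso
    push_neg at hex
    apply hQ
    have hall : ∀ w : Fin n → ℂ, MvPolynomial.eval w Q = 0 := by
      intro w
      set W : EuclideanSpace ℂ (Fin n) := (WithLp.equiv 2 _).symm w with hW
      set g := MvPolynomial.aeval (fun i => Polynomial.C (w i) * Polynomial.X) Q with hg
      set δ : ℝ := ϱ / (‖W‖ + 1) with hδ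
      have hδ0 : 0 < δ := by positivity
      have hroots : Metric.ball (0:ℂ) δ ⊆ {t : ℂ | g.IsRoot t} := by
        intro t ht
        simp only [Metric.mem_ball, dist_zero_right] at ht
        have hmem : t • W ∈ Metric.closedBall (0 : EuclideanSpace ℂ (Fin n)) ϱ := by
          rw [Metric.mem_closedBall, dist_zero_right, norm_smul]
          have h1 : ‖t‖ * ‖W‖ ≤ δ * (‖W‖ + 1) := by
            apply mul_le_mul (le_of_lt ht) (by linarith) (norm_nonneg W) (le_of_lt hδ0)
          have h2 : δ * (‖W‖ + 1) = ϱ := by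
            rw [hδ]; field_simp
          linarith
        have := hex (t • W) hmem
        have hWi : ∀ i, (t • W) i = t * w i := fun i => rfl
        simp only [Polynomial.IsRoot, Set.mem_setOf_eq, hg]
        rw [polyNorm_aux_line]
        simpa [hWi] using this
      have hginf : Set.Infinite {t : ℂ | g.IsRoot t} :=
        (infinite_of_mem_nhds (0:ℂ) (Metric.ball_mem_nhds 0 hδ0)).mono hroots
      have hg0 : g = 0 := Polynomial.eq_zero_of_infinite_isRoot g hginf
      have := polyNorm_aux_line Q w 1
      rw [← hg, hg0] at this
      simpa using this.symm
    apply MvPolynomial.funext (q := 0)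
    intro x
    simp [hall x]

theorem polyNorm_growth {n : ℕ} (hn : 0 < n) (Q : MvPolynomial (Fin n) ℂ) (hQ : Q ≠ 0)
    (ϱ R : ℝ) (hϱ : 0 < ϱ) (hϱR : ϱ ≤ R) :
    Real.log (polyNorm Q ϱ) - Real.log (polyNorm Q R) ≥
      (Q.totalDegree : ℝ) * Real.log (ϱ / R) ∧
    polyNorm Q R ≤ (R / ϱ) ^ Q.totalDegree * polyNorm Q ϱ := by
  have hR : (0:ℝ) < R := lt_of_lt_of_le hϱ hϱR
  have hposϱ : 0 < polyNorm Q ϱ := polyNorm_aux_pos Q hQ ϱ ϱ hϱ le_rfl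
  have hposR : 0 < polyNorm Q R := polyNorm_aux_pos Q hQ ϱ R hϱ hϱR
  have hdiv : ((R / ϱ) ^ Q.totalDegree : ℝ) = ((ϱ / R) ^ Q.totalDegree)⁻¹ := by
    rw [← inv_pow, inv_div]
  have part2 : polyNorm Q R ≤ (R / ϱ) ^ Q.totalDegree * polyNorm Q ϱ := by
    rw [polyNorm]
    apply csSup_le
    · exact ⟨_, ⟨0, by simpa using le_of_lt hR, rfl⟩⟩
    · rintro x ⟨z, hz, rfl⟩
      have hz' : ‖z‖ ≤ R := by simpa using hz
      have := polyNorm_aux_pt Q ϱ R hϱ hϱR z hz'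
      rw [div_eq_mul_inv, ← hdiv, mul_comm] at this
      exact this
  refine ⟨?_, part2⟩
  have hpow : (0:ℝ) < (R / ϱ) ^ Q.totalDegree := by positivity
  have hlog : Real.log (polyNorm Q R) ≤
      (Q.totalDegree : ℝ) * Real.log (R / ϱ) + Real.log (polyNorm Q ϱ) := by
    calc Real.log (polyNorm Q R) ≤ Real.log ((R / ϱ) ^ Q.totalDegree * polyNorm Q ϱ) :=
          Real.log_le_log hposR part2
      _ = (Q.totalDegree : ℝ) * Real.log (R / ϱ) + Real.log (polyNorm Q ϱ) := by
          rw [Real.log_mul (ne_of_gt hpow) (ne_of_gt hposϱ), Real.log_pow]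
  have hneg : Real.log (ϱ / R) = -Real.log (R / ϱ) := by
    rw [← Real.log_inv, inv_div]
  rw [ge_iff_le, hneg]
  linarith
end

section
/- Let S be a finite set of r distinct points in ℂⁿ and let l be a positive integer. If d is a sufficiently large integer, then the linear map φ : ℂ_d[z] → ℂ^{m_l}, where m_l = r·C(l−1+n, n), defined by φ(P) = (∂^α P(s))_{|α| ≤ l−1, s ∈ S} (the list of all partial derivatives of P of total order at most l−1 evaluated at all points of S) is surjective. -/
open MvPolynomial

/-- The jet evaluation map `φ : ℂ_d[z] → ℂ^{m_l}`,
`φ(P) = (∂^α P(s))_{|α| ≤ l−1, s ∈ S}`. -/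
noncomputable def jetMap (n d l : ℕ) (S : Finset (Fin n → ℂ))
    (P : MvPolynomial.restrictTotalDegree (Fin n) ℂ d) :
    ({p // p ∈ S} × {α : Fin n →₀ ℕ // (α.sum fun _ k => k) ≤ l - 1}) → ℂ :=
  fun q => MvPolynomial.eval (q.1 : Fin n → ℂ)
    (iterPDeriv n (⇑q.2.1) (P : MvPolynomial (Fin n) ℂ))

open Finsupp

variable {n : ℕ}

lemma pderiv_pow_monomial (i : Fin n) (k : ℕ) (β : Fin n →₀ ℕ) (c : ℂ) :
    ((pderiv i).toLinearMap ^ k) (monomial β c)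
      = monomial (β - single i k) (c * (β i).descFactorial k) := by
  induction k with
  | zero => simp
  | succ k ih =>
      rw [pow_succ', Module.End.mul_apply, ih]
      show pderiv i _ = _
      rw [pderiv_monomial]
      have h1 : β - single i k - single i 1 = β - single i (k+1) := by
        rw [tsub_tsub, ← Finsupp.single_add]
      have h2 : (β - single i k) i = β i - k := by simp
      rw [h1, h2, Nat.descFactorial_succ]
      push_cast
      ring

lemma foldl_mul_eq {M : Type*} [Monoid M] (g : Fin n → M) :
    ∀ (L : List (Fin n)) (A : M),
      L.foldl (fun E i => g i * E) A = L.foldl (fun E i => g i * E) 1 * A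
  | [], A => by simp
  | a :: L, A => by
      simp only [List.foldl_cons]
      rw [foldl_mul_eq g L (g a * A), foldl_mul_eq g L (g a * 1), mul_one, mul_assoc]

lemma foldl_pderiv_monomial (α : Fin n → ℕ) :
    ∀ (L : List (Fin n)), L.Nodup → ∀ (β : Fin n →₀ ℕ) (c : ℂ),
      (L.foldl (fun E i => ((pderiv i).toLinearMap ^ α i) * E) (1 : Module.End ℂ (MvPolynomial (Fin n) ℂ))) (monomial β c)
        = monomial (β - (L.map fun i => single i (α i)).sum)
            (c * ((L.map fun i => ((β i).descFactorial (α i) : ℂ)).prod))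
  | [], _, β, c => by simp
  | a :: L, hnd, β, c => by
      obtain ⟨ha, hL⟩ := List.nodup_cons.mp hnd
      simp only [List.foldl_cons, mul_one]
      rw [foldl_mul_eq, Module.End.mul_apply, pderiv_pow_monomial,
        foldl_pderiv_monomial α L hL]
      have h1 : (L.map fun i => single i (α i)).sum + single a (α a)
          = ((a :: L).map fun i => single i (α i)).sum := by
        simp [add_comm]
      have h2 : ∀ i ∈ L, ((β - single a (α a)) i) = β i := by
        intro i hi
        have : a ≠ i := fun h => ha (h ▸ hi)
        simp [Finsupp.single_apply, this]
      have h3 : (L.map fun i => (((β - single a (α a)) i).descFactorial (α i) : ℂ)).prod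
          = (L.map fun i => ((β i).descFactorial (α i) : ℂ)).prod := by
        congr 1
        exact List.map_congr_left fun i hi => by rw [h2 i hi]
      have h4 : (β - single a (α a)) - (L.map fun i => single i (α i)).sum
          = β - ((a :: L).map fun i => single i (α i)).sum := by
        rw [tsub_tsub, ← h1, add_comm]
      rw [h3, h4]
      simp only [List.map_cons, List.prod_cons]
      ring_nf

lemma iterPDeriv_monomial (α : Fin n → ℕ) (β : Fin n →₀ ℕ) (c : ℂ) :
    iterPDeriv n α (monomial β c)
      = monomial (β - ∑ i, single i (α i)) (c * ∏ i, ((β i).descFactorial (α i) : ℂ)) := by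
  rw [iterPDeriv, foldl_pderiv_monomial α _ (List.nodup_finRange n),
    Fin.sum_univ_def, Fin.prod_univ_def]

/-- Translation `X i ↦ X i + C (v i)`. -/
noncomputable def Tr (v : Fin n → ℂ) :
    MvPolynomial (Fin n) ℂ →ₐ[ℂ] MvPolynomial (Fin n) ℂ :=
  aeval fun i => X i + C (v i)

@[simp] lemma Tr_X (v : Fin n → ℂ) (i : Fin n) : Tr v (X i) = X i + C (v i) := by
  simp [Tr]

@[simp] lemma Tr_C (v : Fin n → ℂ) (a : ℂ) : Tr v (C a) = C a := by
  simp [Tr, algebraMap_eq]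

lemma pderiv_Tr (v : Fin n → ℂ) (j : Fin n) (P : MvPolynomial (Fin n) ℂ) :
    pderiv j (Tr v P) = Tr v (pderiv j P) := by
  induction P using MvPolynomial.induction_on with
  | C a => simp
  | add p q hp hq => simp [map_add, hp, hq]
  | mul_X p i hp =>
      rw [map_mul, pderiv_mul, pderiv_mul, map_add, map_mul, map_mul, hp, Tr_X]
      by_cases h : j = i <;> simp [h, pderiv_X, Pi.single_apply]

lemma pderiv_Tr' (v : Fin n → ℂ) (j : Fin n) (P : MvPolynomial (Fin n) ℂ) :
    (pderiv j).toLinearMap (Tr v P) = Tr v ((pderiv j).toLinearMap P) :=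
  pderiv_Tr v j P

lemma pderiv_pow_Tr (v : Fin n → ℂ) (j : Fin n) (k : ℕ) (P : MvPolynomial (Fin n) ℂ) :
    ((pderiv j).toLinearMap ^ k) (Tr v P) = Tr v (((pderiv j).toLinearMap ^ k) P) := by
  induction k with
  | zero => simp
  | succ k ih => rw [pow_succ', Module.End.mul_apply, Module.End.mul_apply, ih, pderiv_Tr']

lemma foldl_Tr (α : Fin n → ℕ) (v : Fin n → ℂ) :
    ∀ (L : List (Fin n)) (P : MvPolynomial (Fin n) ℂ),
      (L.foldl (fun E i => ((pderiv i).toLinearMap ^ α i) * E) (1 : Module.End ℂ (MvPolynomial (Fin n) ℂ))) (Tr v P)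
        = Tr v ((L.foldl (fun E i => ((pderiv i).toLinearMap ^ α i) * E) (1 : Module.End ℂ (MvPolynomial (Fin n) ℂ))) P)
  | [], P => by simp
  | a :: L, P => by
      simp only [List.foldl_cons, mul_one]
      rw [foldl_mul_eq, Module.End.mul_apply, Module.End.mul_apply, pderiv_pow_Tr,
        foldl_Tr α v L]

lemma iterPDeriv_Tr (α : Fin n → ℕ) (v : Fin n → ℂ) (P : MvPolynomial (Fin n) ℂ) :
    iterPDeriv n α (Tr v P) = Tr v (iterPDeriv n α P) :=
  foldl_Tr α v _ P

lemma eval_Tr (x v : Fin n → ℂ) (P : MvPolynomial (Fin n) ℂ) :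
    eval x (Tr v P) = eval (fun i => x i + v i) P := by
  induction P using MvPolynomial.induction_on with
  | C a => simp
  | add p q hp hq => simp [map_add, hp, hq]
  | mul_X p i hp => simp [map_mul, hp]

lemma Tr_Tr (v w : Fin n → ℂ) (P : MvPolynomial (Fin n) ℂ) :
    Tr v (Tr w P) = Tr (fun i => v i + w i) P := by
  induction P using MvPolynomial.induction_on with
  | C a => simp
  | add p q hp hq => simp [map_add, hp, hq]
  | mul_X p i hp =>
      simp only [map_mul, hp, map_add, Tr_X, Tr_C]
      ring

lemma Tr_neg_Tr (t : Fin n → ℂ) (P : MvPolynomial (Fin n) ℂ) :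
    Tr (fun i => - t i) (Tr t P) = P := by
  rw [Tr_Tr]
  simp only [neg_add_cancel]
  induction P using MvPolynomial.induction_on with
  | C a => simp
  | add p q hp hq => simp [map_add, hp, hq]
  | mul_X p i hp => simp [map_mul, hp]

lemma sum_single_coe (β : Fin n →₀ ℕ) : (∑ i, single i (β i)) = β := by
  ext j
  rw [Finsupp.finset_sum_apply]
  simp [Finsupp.single_apply]

lemma jet_formula_aux (t : Fin n → ℂ) (β : Fin n →₀ ℕ) (H : MvPolynomial (Fin n) ℂ) :
    eval t (iterPDeriv n ⇑β (Tr (fun i => - t i) H))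
      = (∏ i, ((β i).factorial : ℂ)) * coeff β H := by
  induction H using MvPolynomial.induction_on' with
  | add p q hp hq =>
      rw [map_add, map_add, map_add, coeff_add, hp, hq]
      ring
  | monomial γ c =>
      rw [iterPDeriv_Tr, eval_Tr, iterPDeriv_monomial, sum_single_coe, coeff_monomial]
      have h0 : (fun i => t i + - t i) = (fun _ => (0:ℂ)) := by funext i; ring
      rw [h0]
      by_cases hγ : γ = β
      · subst hγ
        rw [if_pos rfl, tsub_self]
        rw [show ((0 : Fin n →₀ ℕ)) = (0 : Fin n →₀ ℕ) from rfl]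
        rw [monomial_zero', eval_C]
        simp [Nat.descFactorial_self]
        ring
      · rw [if_neg hγ, mul_zero]
        by_cases hle : ∀ i, β i ≤ γ i
        · obtain ⟨i, hi⟩ : ∃ i, γ i ≠ β i := by
            by_contra h
            push_neg at h
            exact hγ (Finsupp.ext h)
          have hne : (γ - β) i ≠ 0 := by
            have := hle i
            simp only [Finsupp.coe_tsub, Pi.sub_apply]
            omega
          rw [eval_monomial]
          have hmem : i ∈ (γ - β).support := Finsupp.mem_support_iff.mpr hne
          rw [Finsupp.prod]
          have hne' : γ i - β i ≠ 0 := by simpa using hne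
          rw [Finset.prod_eq_zero hmem (by simp [zero_pow hne'])]
          ring
        · push_neg at hle
          obtain ⟨i, hi⟩ := hle
          have : ((γ i).descFactorial (β i) : ℂ) = 0 := by
            rw [Nat.descFactorial_of_lt hi]
            simp
          rw [Finset.prod_eq_zero (Finset.mem_univ i) this, mul_zero, monomial_zero, map_zero]

lemma jet_formula (t : Fin n → ℂ) (β : Fin n →₀ ℕ) (P : MvPolynomial (Fin n) ℂ) :
    eval t (iterPDeriv n ⇑β P)
      = (∏ i, ((β i).factorial : ℂ)) * coeff β (Tr t P) := by
  conv_lhs => rw [← Tr_neg_Tr t P]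
  exact jet_formula_aux t β (Tr t P)

lemma apply_le_sum (β : Fin n →₀ ℕ) (j : Fin n) : β j ≤ β.sum fun _ k => k := by
  rw [Finsupp.sum_fintype _ _ (fun _ => rfl)]
  exact Finset.single_le_sum (fun i _ => Nat.zero_le _) (Finset.mem_univ j)

noncomputable instance jetsFintype (N : ℕ) :
    Fintype {α : Fin n →₀ ℕ // (α.sum fun _ k => k) ≤ N} := by
  have hfin : {α : Fin n →₀ ℕ | (α.sum fun _ k => k) ≤ N}.Finite := by
    apply Set.Finite.subset (Finset.finite_toSet
      (Finset.Iic (equivFunOnFinite.symm fun _ => N)))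
    intro α hα
    simp only [Finset.coe_Iic, Set.mem_Iic]
    intro j
    change α j ≤ N
    exact le_trans (apply_le_sum α j) hα
  exact hfin.fintype

/-- The jet evaluation, as a linear map on the whole polynomial ring. -/
noncomputable def Jlin (n l : ℕ) (S : Finset (Fin n → ℂ)) :
    MvPolynomial (Fin n) ℂ →ₗ[ℂ]
      (({p // p ∈ S} × {α : Fin n →₀ ℕ // (α.sum fun _ k => k) ≤ l - 1}) → ℂ) :=
  LinearMap.pi fun q =>
    { toFun := fun P => eval (q.1 : Fin n → ℂ) (iterPDeriv n (⇑q.2.1) P)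
      map_add' := fun P Q => by simp only [map_add]
      map_smul' := fun c P => by
        show eval _ (iterPDeriv n _ (c • P)) = _
        rw [map_smul, smul_eq_C_mul, map_mul, eval_C]
        rfl }

lemma Jlin_apply (n l : ℕ) (S : Finset (Fin n → ℂ)) (P : MvPolynomial (Fin n) ℂ) (q) :
    Jlin n l S P q = eval (q.1 : Fin n → ℂ) (iterPDeriv n (⇑q.2.1) P) := rfl

lemma totalDegree_X_sub_C (j : Fin n) (a : ℂ) :
    (X j - C a : MvPolynomial (Fin n) ℂ).totalDegree ≤ 1 := by
  rw [sub_eq_add_neg]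
  refine le_trans (totalDegree_add _ _) ?_
  simp [totalDegree_X, totalDegree_neg]

noncomputable def Wpoly (l : ℕ) (E : Finset (Fin n → ℂ)) (jf : (Fin n → ℂ) → Fin n) :
    MvPolynomial (Fin n) ℂ :=
  ∏ t ∈ E, (X (jf t) - C (t (jf t))) ^ l

noncomputable def Pbase (l : ℕ) (E : Finset (Fin n → ℂ)) (jf : (Fin n → ℂ) → Fin n)
    (s : Fin n → ℂ) (α : Fin n →₀ ℕ) : MvPolynomial (Fin n) ℂ :=
  Wpoly l E jf * α.prod fun i k => (X i - C (s i)) ^ k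

lemma Pbase_degree (l : ℕ) (E : Finset (Fin n → ℂ)) (jf : (Fin n → ℂ) → Fin n)
    (s : Fin n → ℂ) (α : Fin n →₀ ℕ) :
    (Pbase l E jf s α).totalDegree ≤ l * E.card + (α.sum fun _ k => k) := by
  refine le_trans (totalDegree_mul _ _) (add_le_add ?_ ?_)
  · refine le_trans (totalDegree_finset_prod _ _) ?_
    rw [mul_comm, Finset.card_eq_sum_ones E, Finset.sum_mul, one_mul]
    refine Finset.sum_le_sum fun t _ => ?_
    refine le_trans (totalDegree_pow _ _) ?_
    simpa using Nat.mul_le_mul_left l (totalDegree_X_sub_C (jf t) (t (jf t)))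
  · rw [Finsupp.prod]
    refine le_trans (totalDegree_finset_prod _ _) ?_
    rw [Finsupp.sum]
    refine Finset.sum_le_sum fun i _ => ?_
    refine le_trans (totalDegree_pow _ _) ?_
    simpa using Nat.mul_le_mul_left (α i) (totalDegree_X_sub_C i (s i))

lemma coeff_Tr_Pbase_ne {l : ℕ} (hl : 0 < l) (E : Finset (Fin n → ℂ))
    (jf : (Fin n → ℂ) → Fin n) (s : Fin n → ℂ) (α : Fin n →₀ ℕ)
    {t : Fin n → ℂ} (ht : t ∈ E) {β : Fin n →₀ ℕ} (hβ : (β.sum fun _ k => k) ≤ l - 1) :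
    coeff β (Tr t (Pbase l E jf s α)) = 0 := by
  have hfac : Pbase l E jf s α
      = (X (jf t) - C (t (jf t))) ^ l *
        (Wpoly l (E.erase t) jf * α.prod fun i k => (X i - C (s i)) ^ k) := by
    rw [Pbase, Wpoly, ← Finset.mul_prod_erase E _ ht, mul_assoc]
    rfl
  rw [hfac, map_mul, map_pow, map_sub, Tr_X, Tr_C, add_sub_cancel_right,
    X_pow_eq_monomial, coeff_monomial_mul', if_neg]
  rw [Finsupp.single_le_iff]
  have h1 := apply_le_sum β (jf t)
  omega

lemma coeff_Tr_Pbase_self (l : ℕ) (E : Finset (Fin n → ℂ)) (jf : (Fin n → ℂ) → Fin n)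
    (s : Fin n → ℂ) (α β : Fin n →₀ ℕ) :
    coeff β (Tr s (Pbase l E jf s α))
      = if α ≤ β then coeff (β - α) (Tr s (Wpoly l E jf)) else 0 := by
  have h1 : Tr s (α.prod fun i k => (X i - C (s i)) ^ k) = monomial α 1 := by
    rw [map_finsuppProd]
    rw [monomial_eq, C_1, one_mul]
    exact Finsupp.prod_congr fun i _ => by rw [map_pow, map_sub, Tr_X, Tr_C,
      add_sub_cancel_right]
  rw [Pbase, map_mul, h1, coeff_mul_monomial']
  split_ifs with h
  · rw [mul_one]
  · rfl

lemma constCoeff_Tr_W (l : ℕ) (E : Finset (Fin n → ℂ)) (jf : (Fin n → ℂ) → Fin n)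
    (s : Fin n → ℂ) (h : ∀ t ∈ E, s (jf t) ≠ t (jf t)) :
    coeff 0 (Tr s (Wpoly l E jf)) ≠ 0 := by
  have : coeff 0 (Tr s (Wpoly l E jf)) = constantCoeff (Tr s (Wpoly l E jf)) := rfl
  rw [this, Wpoly, map_prod, map_prod]
  rw [Finset.prod_ne_zero_iff]
  intro t ht
  rw [map_pow, map_sub, Tr_X, Tr_C, map_pow, map_sub, map_add, constantCoeff_X,
    constantCoeff_C, constantCoeff_C, zero_add]
  exact pow_ne_zero _ (sub_ne_zero.mpr (h t ht))

lemma pi_single_eq_smul {ι : Type*} [DecidableEq ι] (p : ι) (c : ℂ) :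
    (Pi.single p c : ι → ℂ) = c • (Pi.single p 1 : ι → ℂ) := by
  funext x
  by_cases h : x = p <;> simp [Pi.single_apply, h]

set_option maxHeartbeats 1000000 in
theorem jetMap_surjective {n : ℕ} (hn : 0 < n) (r : ℕ) (S : Finset (Fin n → ℂ))
    (hcard : S.card = r) (l : ℕ) (hl : 0 < l) :
    ∃ D : ℕ, ∀ d : ℕ, D ≤ d → Function.Surjective (jetMap n d l S) := by
  classical
  refine ⟨l * r + l, fun d hd => ?_⟩
  have hsep : ∀ s t : Fin n → ℂ, s ≠ t → ∃ j, s j ≠ t j := fun s t h => Function.ne_iff.mp h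
  let jf : (Fin n → ℂ) → (Fin n → ℂ) → Fin n :=
    fun s t => if h : s ≠ t then (hsep s t h).choose else ⟨0, hn⟩
  have jf_spec : ∀ s t : Fin n → ℂ, s ≠ t → s (jf s t) ≠ t (jf s t) := by
    intro s t h
    simp only [jf, dif_pos h]
    exact (hsep s t h).choose_spec
  set M := Submodule.map (Jlin n l S) (restrictTotalDegree (Fin n) ℂ (l * r + l)) with hM
  have hPmem : ∀ (s : Fin n → ℂ), s ∈ S → ∀ α : Fin n →₀ ℕ, (α.sum fun _ k => k) ≤ l - 1 →
      Pbase l (S.erase s) (jf s) s α ∈ restrictTotalDegree (Fin n) ℂ (l * r + l) := by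
    intro s hs α hα
    rw [mem_restrictTotalDegree]
    refine le_trans (Pbase_degree _ _ _ _ _) ?_
    have h1 : (S.erase s).card ≤ r := hcard ▸ Finset.card_le_card (Finset.erase_subset s S)
    have h2 := Nat.mul_le_mul_left l h1
    omega
  have hJ : ∀ (P : MvPolynomial (Fin n) ℂ)
      (q : {p // p ∈ S} × {α : Fin n →₀ ℕ // (α.sum fun _ k => k) ≤ l - 1}),
      Jlin n l S P q
        = (∏ i, ((q.2.1 i).factorial : ℂ)) * coeff q.2.1 (Tr (q.1 : Fin n → ℂ) P) := by
    intro P q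
    rw [Jlin_apply, jet_formula]
  have key : ∀ m : ℕ,
      ∀ q : {p // p ∈ S} × {α : Fin n →₀ ℕ // (α.sum fun _ k => k) ≤ l - 1},
      l - 1 - (q.2.1.sum fun _ k => k) < m → Pi.single q (1:ℂ) ∈ M := by
    intro m
    induction m with
    | zero => exact fun q h => absurd h (by omega)
    | succ m ih =>
      rintro ⟨s, β⟩ hq
      have hq' : l - 1 - ((β : Fin n →₀ ℕ).sum fun _ k => k) < m + 1 := hq
      clear hq
      set P := Pbase l (S.erase s.1) (jf s.1) s.1 β.1 with hPdef
      set v := Jlin n l S P with hvdef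
      have hvM : v ∈ M := ⟨P, hPmem s.1 s.2 β.1 β.2, rfl⟩
      have hW : ∀ t ∈ S.erase s.1, (s.1 : Fin n → ℂ) (jf s.1 t) ≠ t (jf s.1 t) := by
        intro t ht
        exact jf_spec s.1 t fun h => (Finset.mem_erase.mp ht).1 h.symm
      have hfact : ∀ γ : Fin n →₀ ℕ, (∏ i, ((γ i).factorial : ℂ)) ≠ 0 := by
        intro γ
        rw [Finset.prod_ne_zero_iff]
        intro i _
        exact_mod_cast (Nat.factorial_pos _).ne'
      have hdiag : v (s, β) ≠ 0 := by
        rw [hvdef, hJ, hPdef]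
        simp only
        rw [coeff_Tr_Pbase_self, if_pos le_rfl, tsub_self]
        exact mul_ne_zero (hfact β.1) (constCoeff_Tr_W l _ _ _ hW)
      have hoff : ∀ p : {p // p ∈ S} × {α : Fin n →₀ ℕ // (α.sum fun _ k => k) ≤ l - 1},
          p ≠ (s, β) → v p ≠ 0 →
          (β.1.sum fun _ k => k) < (p.2.1.sum fun _ k => k) := by
        rintro ⟨t, γ⟩ hne hv0
        rw [hvdef, hJ, hPdef] at hv0
        simp only at hv0
        have hts : t = s := by
          by_contra h
          have ht : (t : Fin n → ℂ) ∈ S.erase s.1 :=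
            Finset.mem_erase.mpr ⟨fun hh => h (Subtype.ext hh), t.2⟩
          rw [coeff_Tr_Pbase_ne hl _ _ _ _ ht γ.2, mul_zero] at hv0
          exact hv0 rfl
        subst hts
        rw [coeff_Tr_Pbase_self] at hv0
        have hle : β.1 ≤ γ.1 := by
          by_contra h
          rw [if_neg h, mul_zero] at hv0
          exact hv0 rfl
        have hγβ : β.1 ≠ γ.1 := by
          intro h
          exact hne (by rw [Prod.ext_iff]; exact ⟨rfl, Subtype.ext h.symm⟩)
        obtain ⟨i, hi⟩ : ∃ i, β.1 i ≠ γ.1 i := by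
          by_contra h
          push_neg at h
          exact hγβ (Finsupp.ext h)
        rw [Finsupp.sum_fintype _ _ (fun _ => rfl), Finsupp.sum_fintype _ _ (fun _ => rfl)]
        refine Finset.sum_lt_sum (fun i _ => hle i) ⟨i, Finset.mem_univ i, ?_⟩
        exact lt_of_le_of_ne (hle i) hi
      -- decomposition of v
      have hv_eq : v = ∑ p, Pi.single p (v p) := (Finset.univ_sum_single v).symm
      have hrest : ∀ p ∈ Finset.univ.erase (s, β), Pi.single p (v p) ∈ M := by
        intro p hp
        by_cases h0 : v p = 0
        · rw [h0, Pi.single_zero]; exact M.zero_mem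
        · rw [pi_single_eq_smul]
          refine M.smul_mem _ (ih p ?_)
          have h3 := hoff p (Finset.ne_of_mem_erase hp) h0
          have h2 := p.2.2
          omega
      have hsingle : Pi.single (s, β) (1:ℂ)
          = (v (s, β))⁻¹ • (v - ∑ p ∈ Finset.univ.erase (s, β), Pi.single p (v p)) := by
        have h1 : v - ∑ p ∈ Finset.univ.erase (s, β), Pi.single p (v p)
            = Pi.single (s, β) (v (s, β)) := by
          rw [sub_eq_iff_eq_add,
            Finset.add_sum_erase _ (fun p => Pi.single p (v p)) (Finset.mem_univ (s, β))]
          exact hv_eq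
        rw [h1, pi_single_eq_smul (s, β) (v (s, β)), inv_smul_smul₀ hdiag]
      rw [hsingle]
      exact M.smul_mem _ (M.sub_mem hvM (Submodule.sum_mem M hrest))
  -- conclude
  intro c
  have hc : c ∈ M := by
    have h1 : c = ∑ q, Pi.single q (c q) := (Finset.univ_sum_single c).symm
    rw [h1]
    refine Submodule.sum_mem M fun q _ => ?_
    rw [pi_single_eq_smul]
    refine M.smul_mem _ (key l q ?_)
    omega
  have hmono : M ≤ Submodule.map (Jlin n l S) (restrictTotalDegree (Fin n) ℂ d) := by
    refine Submodule.map_mono fun P hP => ?_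
    rw [mem_restrictTotalDegree] at hP ⊢
    omega
  obtain ⟨P, hP, hPc⟩ := hmono hc
  exact ⟨⟨P, hP⟩, hPc⟩
end

section
/- (Évain) For every n ≥ 1 and every positive integer m there exists a set S of mⁿ distinct points in ℂⁿ whose singular degree satisfies Ω(S) = m. -/
open MvPolynomial Filter

namespace Evain
variable {n : ℕ}
noncomputable abbrev pd (i : Fin n) : Module.End ℂ (MvPolynomial (Fin n) ℂ) :=
  (MvPolynomial.pderiv i).toLinearMap
lemma foldl_eq_mul (α : Fin n → ℕ) :
    ∀ (l : List (Fin n)) (E : Module.End ℂ (MvPolynomial (Fin n) ℂ)),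
      List.foldl (fun L i => (pd i ^ α i) * L) E l
        = List.foldl (fun L i => (pd i ^ α i) * L) 1 l * E
  | [], E => by simp
  | i :: t, E => by
    simp only [List.foldl_cons]
    rw [foldl_eq_mul α t ((pd i ^ α i) * E), foldl_eq_mul α t ((pd i ^ α i) * 1)]
    simp [mul_assoc]
lemma pd_pow_monomial (i : Fin n) (k : ℕ) (e : Fin n →₀ ℕ) (c : ℂ) :
    (pd i ^ k) (monomial e c)
      = monomial (e - Finsupp.single i k) (c * ((e i).descFactorial k : ℂ)) := by
  induction k with
  | zero => simp
  | succ k ih =>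
    rw [pow_succ', Module.End.mul_apply, ih]
    show pderiv i _ = _
    rw [pderiv_monomial]
    congr 1
    · rw [tsub_tsub, ← Finsupp.single_add]
    · rw [Finsupp.tsub_apply, Finsupp.single_eq_same, Nat.descFactorial_succ]
      push_cast [mul_assoc]
      ring

lemma foldl_monomial (α : Fin n → ℕ) :
    ∀ (l : List (Fin n)), l.Nodup → ∀ (e : Fin n →₀ ℕ) (c : ℂ),
      (List.foldl (fun L i => (pd i ^ α i) * L) 1 l) (monomial e c)
        = monomial (e - ∑ i ∈ l.toFinset, Finsupp.single i (α i))
            (c * ∏ i ∈ l.toFinset, ((e i).descFactorial (α i) : ℂ))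
  | [], _, e, c => by simp
  | i :: t, hn, e, c => by
    have hit : i ∉ t := by simp [List.nodup_cons] at hn; exact hn.1
    have hnt : t.Nodup := by simp [List.nodup_cons] at hn; exact hn.2
    simp only [List.foldl_cons]
    rw [foldl_eq_mul, Module.End.mul_apply, Module.End.mul_apply, Module.End.one_apply,
      pd_pow_monomial, foldl_monomial α t hnt]
    have htf : i ∉ t.toFinset := by simpa using hit
    have happ : ∀ j ∈ t.toFinset, (e - Finsupp.single i (α i)) j = e j := by
      intro j hj
      rw [Finsupp.tsub_apply, Finsupp.single_apply, if_neg (by rintro rfl; exact htf hj)]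
      simp
    rw [List.toFinset_cons, Finset.sum_insert htf, Finset.prod_insert htf]
    congr 1
    · rw [tsub_tsub]
    · rw [Finset.prod_congr rfl (fun j hj => by rw [happ j hj])]
      ring

lemma iterPDeriv_monomial (α : Fin n → ℕ) (e : Fin n →₀ ℕ) (c : ℂ) :
    iterPDeriv n α (monomial e c)
      = monomial (e - ∑ i, Finsupp.single i (α i))
          (c * ∏ i, ((e i).descFactorial (α i) : ℂ)) := by
  rw [iterPDeriv, foldl_monomial α _ (List.nodup_finRange n), List.toFinset_finRange]

lemma eval_zero_iterPDeriv (α : Fin n → ℕ) (P : MvPolynomial (Fin n) ℂ) :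
    eval (0 : Fin n → ℂ) (iterPDeriv n α P)
      = (∏ i, ((α i).factorial : ℂ)) * coeff (∑ i, Finsupp.single i (α i)) P := by
  set ᾱ : Fin n →₀ ℕ := ∑ i, Finsupp.single i (α i) with hᾱ
  have hᾱ_apply : ∀ j, ᾱ j = α j := by
    intro j
    rw [hᾱ, Finsupp.finset_sum_apply]
    rw [Finset.sum_eq_single j (fun i _ hij => Finsupp.single_eq_of_ne' hij)
      (fun h => absurd (Finset.mem_univ j) h)]
    exact Finsupp.single_eq_same
  conv_lhs => rw [P.as_sum]
  rw [map_sum, map_sum]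
  have hterm : ∀ d ∈ P.support,
      eval (0 : Fin n → ℂ) (iterPDeriv n α (monomial d (coeff d P)))
        = if d = ᾱ then (∏ i, ((α i).factorial : ℂ)) * coeff d P else 0 := by
    intro d _
    rw [iterPDeriv_monomial, eval_monomial]
    by_cases hd : d = ᾱ
    · subst hd
      rw [tsub_self, if_pos rfl, Finsupp.prod_zero_index, mul_one]
      rw [Finset.prod_congr rfl (fun i _ => by rw [hᾱ_apply i, Nat.descFactorial_self])]
      ring
    · rw [if_neg hd]
      by_cases hsub : d - ᾱ = 0
      · have hle : ∀ i, d i ≤ ᾱ i := by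
          intro i
          have := congrFun (congrArg (fun (f : Fin n →₀ ℕ) => (f : Fin n → ℕ)) hsub) i
          simp only [Finsupp.coe_tsub, Pi.sub_apply, Finsupp.coe_zero, Pi.zero_apply] at this
          omega
        have : ∃ i, d i < ᾱ i := by
          by_contra hcon
          push_neg at hcon
          exact hd (Finsupp.ext fun i => le_antisymm (hle i) (hcon i))
        obtain ⟨i, hi⟩ := this
        have : ((d i).descFactorial (α i) : ℂ) = 0 := by
          rw [hᾱ_apply i] at hi
          rw [Nat.descFactorial_eq_zero_iff_lt.2 hi, Nat.cast_zero]
        rw [Finset.prod_eq_zero (Finset.mem_univ i) this]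
        ring
      · have : (d - ᾱ).support.Nonempty := Finsupp.support_nonempty_iff.2 hsub
        obtain ⟨i, hi⟩ := this
        rw [Finsupp.prod, Finset.prod_eq_zero hi
          (by
            show (0 : ℂ) ^ ((d - ᾱ) i) = 0
            exact zero_pow (Finsupp.mem_support_iff.1 hi))]
        ring
  rw [Finset.sum_congr rfl hterm, Finset.sum_ite_eq' P.support ᾱ
    (fun d => (∏ i, ((α i).factorial : ℂ)) * coeff d P)]
  by_cases h : ᾱ ∈ P.support
  · rw [if_pos h]
  · rw [if_neg h, MvPolynomial.notMem_support_iff.1 h, mul_zero]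

/-- Shift substitution `z ↦ z + p`. -/
noncomputable def τ (p : Fin n → ℂ) : MvPolynomial (Fin n) ℂ →ₐ[ℂ] MvPolynomial (Fin n) ℂ :=
  aeval (fun i => X i + C (p i))

lemma τ_τ (p q : Fin n → ℂ) (P : MvPolynomial (Fin n) ℂ) : τ p (τ q P) = τ (p + q) P := by
  have : (τ p).comp (τ q) = τ (p + q) := by
    apply algHom_ext
    intro i
    simp [τ, map_add, aeval_X, aeval_C]
    ring
  exact DFunLike.congr_fun this P

lemma τ_zero (P : MvPolynomial (Fin n) ℂ) : τ (0 : Fin n → ℂ) P = P := by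
  have : τ (0 : Fin n → ℂ) = AlgHom.id ℂ _ := by
    apply algHom_ext; intro i; simp [τ]
  rw [this]; rfl

lemma τ_injective (p : Fin n → ℂ) : Function.Injective (τ p) := by
  intro a b h
  have := congrArg (τ (-p)) h
  rwa [τ_τ, τ_τ, neg_add_cancel, τ_zero, τ_zero] at this

lemma pderiv_τ (i : Fin n) (p : Fin n → ℂ) (P : MvPolynomial (Fin n) ℂ) :
    pderiv i (τ p P) = τ p (pderiv i P) := by
  induction P using MvPolynomial.induction_on with
  | C a => simp [τ]
  | add f g hf hg => simp [map_add, hf, hg]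
  | mul_X f j hf =>
    have h2 : pderiv i (τ p (X j)) = τ p (pderiv i (X j)) := by
      classical
      have h1 : τ p (X j) = X j + C (p j) := by simp [τ]
      rw [h1, map_add, pderiv_C, add_zero, pderiv_X]
      rcases eq_or_ne j i with rfl | hji
      · simp [Pi.single_apply]
      · simp [Pi.single_apply, hji]
    rw [map_mul, pderiv_mul, hf, h2, pderiv_mul, map_add, map_mul, map_mul]

lemma iterPDeriv_τ (α : Fin n → ℕ) (p : Fin n → ℂ) (P : MvPolynomial (Fin n) ℂ) :
    iterPDeriv n α (τ p P) = τ p (iterPDeriv n α P) := by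
  have hpow : ∀ (i : Fin n) (k : ℕ) (Q : MvPolynomial (Fin n) ℂ),
      (pd i ^ k) (τ p Q) = τ p ((pd i ^ k) Q) := by
    intro i k
    induction k with
    | zero => intro Q; simp
    | succ k ih =>
      intro Q
      rw [pow_succ, Module.End.mul_apply, Module.End.mul_apply]
      show (pd i ^ k) (pderiv i (τ p Q)) = τ p ((pd i ^ k) (pderiv i Q))
      rw [pderiv_τ, ih]
  have : ∀ (l : List (Fin n)) (Q : MvPolynomial (Fin n) ℂ),
      (List.foldl (fun L i => (pd i ^ α i) * L) 1 l) (τ p Q)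
        = τ p ((List.foldl (fun L i => (pd i ^ α i) * L) 1 l) Q) := by
    intro l
    induction l with
    | nil => intro Q; simp
    | cons i t ih =>
      intro Q
      simp only [List.foldl_cons]
      rw [foldl_eq_mul α t ((pd i ^ α i) * 1), mul_one,
        Module.End.mul_apply, Module.End.mul_apply, hpow, ih]
  exact this _ P

lemma eval_zero_τ (p : Fin n → ℂ) (Q : MvPolynomial (Fin n) ℂ) :
    eval (0 : Fin n → ℂ) (τ p Q) = eval p Q := by
  induction Q using MvPolynomial.induction_on with
  | C a => simp [τ]
  | add f g hf hg => rw [map_add, map_add, hf, hg, map_add]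
  | mul_X f j hf =>
    rw [map_mul, map_mul, map_mul, hf]
    congr 1
    have hX : τ p (X j) = X j + C (p j) := by simp [τ]
    rw [hX]
    simp

/-- All monomials of `Q` have total degree at least `l`. -/
def AllDegGE (Q : MvPolynomial (Fin n) ℂ) (l : ℕ) : Prop :=
  ∀ d ∈ Q.support, l ≤ d.sum fun _ e => e

lemma sum_single_apply (α : Fin n → ℕ) (j : Fin n) :
    (∑ i, Finsupp.single i (α i)) j = α j := by
  rw [Finsupp.finset_sum_apply]
  rw [Finset.sum_eq_single j (fun i _ hij => Finsupp.single_eq_of_ne' hij)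
    (fun h => absurd (Finset.mem_univ j) h)]
  exact Finsupp.single_eq_same

lemma finsuppSum_eq (d : Fin n →₀ ℕ) : (d.sum fun _ e => e) = ∑ i, d i :=
  Finsupp.sum_fintype _ _ (fun _ => rfl)

theorem hasOrderAtLeast_iff (P : MvPolynomial (Fin n) ℂ) (p : Fin n → ℂ) (l : ℕ) :
    HasOrderAtLeast P p l ↔ AllDegGE (τ p P) l := by
  have key : ∀ α : Fin n → ℕ, eval p (iterPDeriv n α P)
      = (∏ i, ((α i).factorial : ℂ)) * coeff (∑ i, Finsupp.single i (α i)) (τ p P) := by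
    intro α
    rw [← eval_zero_iterPDeriv, iterPDeriv_τ, eval_zero_τ]
  constructor
  · intro h d hd
    by_contra hlt
    push_neg at hlt
    have h1 : eval p (iterPDeriv n (fun i => d i) P) = 0 := by
      apply h
      rw [← finsuppSum_eq]
      exact hlt
    rw [key] at h1
    have h2 : (∑ i, Finsupp.single i (d i)) = d := by
      ext j; rw [sum_single_apply]
    rw [h2] at h1
    have h3 : (∏ i, ((d i).factorial : ℂ)) ≠ 0 := by
      apply Finset.prod_ne_zero_iff.2
      intro i _
      exact_mod_cast Nat.factorial_ne_zero _
    exact (MvPolynomial.mem_support_iff.1 hd) (by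
      rcases mul_eq_zero.1 h1 with h | h
      · exact absurd h h3
      · exact h)
  · intro h α hα
    rw [key]
    have : coeff (∑ i, Finsupp.single i (α i)) (τ p P) = 0 := by
      by_contra hc
      have := h _ (MvPolynomial.mem_support_iff.2 hc)
      rw [finsuppSum_eq] at this
      simp only [sum_single_apply] at this
      omega
    rw [this, mul_zero]

lemma sum_add (d₁ d₂ : Fin n →₀ ℕ) :
    ((d₁ + d₂).sum fun _ e => e) = (d₁.sum fun _ e => e) + (d₂.sum fun _ e => e) :=
  Finsupp.sum_add_index' (fun _ => rfl) (fun _ _ _ => rfl)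

lemma sum_single (i : Fin n) (k : ℕ) :
    ((Finsupp.single i k).sum fun _ e => e) = k :=
  Finsupp.sum_single_index rfl

lemma AllDegGE.mul {A B : MvPolynomial (Fin n) ℂ} {a b : ℕ}
    (hA : AllDegGE A a) (hB : AllDegGE B b) : AllDegGE (A * B) (a + b) := by
  intro d hd
  classical
  have h := MvPolynomial.mem_support_iff.1 hd
  rw [MvPolynomial.coeff_mul] at h
  obtain ⟨x, hx, hne⟩ := Finset.exists_ne_zero_of_sum_ne_zero h
  have hx1 : coeff x.1 A ≠ 0 := fun h0 => hne (by rw [h0, zero_mul])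
  have hx2 : coeff x.2 B ≠ 0 := fun h0 => hne (by rw [h0, mul_zero])
  have hsum := Finset.HasAntidiagonal.mem_antidiagonal.1 hx
  have := hA x.1 (MvPolynomial.mem_support_iff.2 hx1)
  have := hB x.2 (MvPolynomial.mem_support_iff.2 hx2)
  rw [← hsum, sum_add]
  omega

lemma AllDegGE.pow {A : MvPolynomial (Fin n) ℂ} (hA : AllDegGE A 1) (l : ℕ) :
    AllDegGE (A ^ l) l := by
  induction l with
  | zero => intro d hd; omega
  | succ l ih =>
    have := ih.mul hA
    rwa [← pow_succ] at this

lemma AllDegGE.of_X_mul {B : MvPolynomial (Fin n) ℂ} {i : Fin n} {l : ℕ}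
    (h : AllDegGE (X i * B) (l + 1)) : AllDegGE B l := by
  intro d hd
  have hc : coeff (Finsupp.single i 1 + d) (X i * B) = coeff d B := coeff_X_mul d i B
  have : Finsupp.single i 1 + d ∈ (X i * B).support := by
    rw [MvPolynomial.mem_support_iff, hc]
    exact MvPolynomial.mem_support_iff.1 hd
  have := h _ this
  rw [sum_add, sum_single] at this
  omega

lemma AllDegGE.of_unit_mul {U B : MvPolynomial (Fin n) ℂ} {t : ℕ}
    (hU : constantCoeff U ≠ 0) (h : AllDegGE (U * B) t) : AllDegGE B t := by
  classical
  rcases eq_or_ne B 0 with rfl | hB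
  · intro d hd; simp at hd
  obtain ⟨d₀, hd₀, hmin⟩ := Finset.exists_min_image B.support (fun d => d.sum fun _ e => e)
    (Finset.nonempty_iff_ne_empty.2 (mt MvPolynomial.support_eq_empty.1 hB))
  have hcoeff : coeff d₀ (U * B) = constantCoeff U * coeff d₀ B := by
    rw [MvPolynomial.coeff_mul]
    rw [Finset.sum_eq_single ((0 : Fin n →₀ ℕ), d₀)]
    · rfl
    · rintro ⟨d₁, d₂⟩ hmem hne
      rcases eq_or_ne (coeff d₂ B) 0 with h2 | h2
      · rw [h2, mul_zero]
      have hsum := Finset.HasAntidiagonal.mem_antidiagonal.1 hmem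
      have hle := hmin d₂ (MvPolynomial.mem_support_iff.2 h2)
      have hadd : (d₁.sum fun _ e => e) + (d₂.sum fun _ e => e) = d₀.sum fun _ e => e := by
        rw [← sum_add, hsum]
      have h10 : (d₁.sum fun _ e => e) = 0 := by omega
      have hd1 : d₁ = 0 := by
        ext j
        rw [finsuppSum_eq] at h10
        have := Finset.sum_eq_zero_iff.1 h10 j (Finset.mem_univ j)
        simpa using this
      subst hd1
      rw [zero_add] at hsum
      have hd2 : d₂ = d₀ := by simpa using hsum
      exact absurd (by rw [hd2]) hne
    · intro hnot
      exact absurd (Finset.HasAntidiagonal.mem_antidiagonal.2 (zero_add d₀)) hnot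
  have hne : coeff d₀ (U * B) ≠ 0 := by
    rw [hcoeff]
    exact mul_ne_zero hU (MvPolynomial.mem_support_iff.1 hd₀)
  have ht := h d₀ (MvPolynomial.mem_support_iff.2 hne)
  intro d hd
  exact le_trans ht (hmin d hd)

/-- Substitute `X i ↦ C a`, keep other variables. -/
noncomputable def subC (i : Fin n) (a : ℂ) : MvPolynomial (Fin n) ℂ →ₐ[ℂ] MvPolynomial (Fin n) ℂ :=
  aeval (fun j => if j = i then C a else X j)

/-- Substitute `X i ↦ X i + C a`, keep other variables. -/
noncomputable def shiftOne (i : Fin n) (a : ℂ) :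
    MvPolynomial (Fin n) ℂ →ₐ[ℂ] MvPolynomial (Fin n) ℂ :=
  aeval (fun j => if j = i then X j + C a else X j)

lemma subC_monomial (i : Fin n) (a : ℂ) (d : Fin n →₀ ℕ) (c : ℂ) :
    subC i a (monomial d c) = monomial (d.erase i) (c * a ^ d i) := by
  classical
  rw [subC, aeval_monomial, monomial_eq]
  rw [Finsupp.prod_fintype _ _ (fun j => pow_zero _), Finsupp.prod_fintype _ _ (fun j => pow_zero _)]
  rw [← Finset.mul_prod_erase Finset.univ _ (Finset.mem_univ i),
    ← Finset.mul_prod_erase Finset.univ (fun j => X j ^ (d.erase i) j) (Finset.mem_univ i)]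
  simp only [if_pos rfl, Finsupp.erase_same, pow_zero]
  have hrest : ∀ j ∈ Finset.univ.erase i,
      (if j = i then C a else X j : MvPolynomial (Fin n) ℂ) ^ d j = X j ^ (d.erase i) j := by
    intro j hj
    have hji : j ≠ i := (Finset.mem_erase.1 hj).1
    rw [if_neg hji, Finsupp.erase_ne hji]
  rw [Finset.prod_congr rfl hrest]
  have halg : ∀ x : ℂ, (algebraMap ℂ (MvPolynomial (Fin n) ℂ)) x = C x := fun _ => rfl
  simp only [if_true, halg, map_mul, map_pow]
  ring


lemma support_subC (i : Fin n) (a : ℂ) (P : MvPolynomial (Fin n) ℂ) :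
    (subC i a P).support ⊆ P.support.image (fun d => d.erase i) := by
  classical
  intro e he
  conv at he => rw [P.as_sum, map_sum]
  have := MvPolynomial.support_sum he
  obtain ⟨d, hd, hed⟩ := Finset.mem_biUnion.1 this
  rw [subC_monomial] at hed
  have := MvPolynomial.support_monomial_subset hed
  rw [Finset.mem_singleton] at this
  exact Finset.mem_image.2 ⟨d, hd, this.symm⟩

lemma erase_sum_le (i : Fin n) (d : Fin n →₀ ℕ) :
    ((d.erase i).sum fun _ e => e) ≤ d.sum fun _ e => e := by
  rw [finsuppSum_eq, finsuppSum_eq]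
  apply Finset.sum_le_sum
  intro j _
  rcases eq_or_ne j i with rfl | hji
  · rw [Finsupp.erase_same]; omega
  · rw [Finsupp.erase_ne hji]

lemma totalDegree_subC_le (i : Fin n) (a : ℂ) (P : MvPolynomial (Fin n) ℂ) :
    (subC i a P).totalDegree ≤ P.totalDegree := by
  apply Finset.sup_le
  intro e he
  obtain ⟨d, hd, rfl⟩ := Finset.mem_image.1 (support_subC i a P he)
  exact le_trans (erase_sum_le i d) (le_totalDegree hd)

lemma X_dvd_of_subC_zero_zero (i : Fin n) (P : MvPolynomial (Fin n) ℂ)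
    (h : subC i 0 P = 0) : X i ∣ P := by
  classical
  have hcoeff : ∀ d ∈ P.support, d i ≠ 0 := by
    intro d hd hdi
    -- coeff d (subC i 0 P) = coeff d P  when d i = 0
    have hs : subC i 0 P = ∑ e ∈ P.support, monomial (e.erase i) (coeff e P * 0 ^ e i) := by
      conv_lhs => rw [P.as_sum, map_sum]
      exact Finset.sum_congr rfl fun e _ => subC_monomial i 0 e (coeff e P)
    have hthis : coeff d (subC i 0 P) = coeff d P := by
      rw [hs, MvPolynomial.coeff_sum]
      rw [Finset.sum_eq_single d]
      · rw [hdi, pow_zero, mul_one]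
        have herd : d.erase i = d := by
          ext j
          rcases eq_or_ne j i with rfl | hji
          · rw [Finsupp.erase_same, hdi]
          · rw [Finsupp.erase_ne hji]
        rw [herd, MvPolynomial.coeff_monomial, if_pos rfl]
      · intro e he hne
        rw [MvPolynomial.coeff_monomial]
        rcases eq_or_ne (e i) 0 with h0 | h0
        · have herase : e.erase i = e := by
            ext j
            rcases eq_or_ne j i with rfl | hji
            · rw [Finsupp.erase_same, h0]
            · rw [Finsupp.erase_ne hji]
          rw [herase, if_neg hne]
        · rw [zero_pow h0, mul_zero]
          simp
      · intro hd'
        exact absurd hd hd'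
    rw [h, MvPolynomial.coeff_zero] at hthis
    exact MvPolynomial.mem_support_iff.1 hd hthis.symm
  -- now every monomial divisible by X i
  conv_rhs => rw [P.as_sum]
  apply Finset.dvd_sum
  intro d hd
  have hd1 : d = Finsupp.single i 1 + (d - Finsupp.single i 1) := by
    ext j
    rcases eq_or_ne j i with rfl | hji
    · rw [Finsupp.add_apply, Finsupp.single_eq_same, Finsupp.tsub_apply, Finsupp.single_eq_same]
      have := hcoeff d hd
      omega
    · rw [Finsupp.add_apply, Finsupp.single_eq_of_ne' (Ne.symm hji), Finsupp.tsub_apply,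
        Finsupp.single_eq_of_ne' (Ne.symm hji)]
      omega
  have : monomial d (coeff d P) = X i * monomial (d - Finsupp.single i 1) (coeff d P) := by
    rw [X, MvPolynomial.monomial_mul, one_mul, ← hd1]
  rw [this]
  exact Dvd.intro _ rfl

lemma shiftOne_comp (i : Fin n) (a b : ℂ) (P : MvPolynomial (Fin n) ℂ) :
    shiftOne i a (shiftOne i b P) = shiftOne i (a + b) P := by
  have : (shiftOne i a).comp (shiftOne i b) = shiftOne i (a + b) := by
    apply algHom_ext
    intro j
    rcases eq_or_ne j i with rfl | hji
    · simp [shiftOne, MvPolynomial.algebraMap_eq]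
      ring
    · simp [shiftOne, hji]
  exact DFunLike.congr_fun this P

lemma shiftOne_zero_apply (i : Fin n) (P : MvPolynomial (Fin n) ℂ) : shiftOne i 0 P = P := by
  have : shiftOne i (0 : ℂ) = AlgHom.id ℂ _ := by
    apply algHom_ext
    intro j
    simp only [shiftOne, aeval_X, AlgHom.id_apply]
    split <;> simp
  rw [this]; rfl

lemma subC_zero_shiftOne (i : Fin n) (a : ℂ) (P : MvPolynomial (Fin n) ℂ) :
    subC i 0 (shiftOne i a P) = subC i a P := by
  have : (subC i 0).comp (shiftOne i a) = subC i a := by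
    apply algHom_ext
    intro j
    rcases eq_or_ne j i with rfl | hji
    · simp [subC, shiftOne, MvPolynomial.algebraMap_eq]
    · simp [subC, shiftOne, hji]
  exact DFunLike.congr_fun this P

lemma X_sub_C_dvd (i : Fin n) (a : ℂ) (P : MvPolynomial (Fin n) ℂ)
    (h : subC i a P = 0) : (X i - C a) ∣ P := by
  have hXdvd : X i ∣ shiftOne i a P :=
    X_dvd_of_subC_zero_zero i _ (by rw [subC_zero_shiftOne, h])
  have := map_dvd (shiftOne i (-a)) hXdvd
  rw [shiftOne_comp, neg_add_cancel, shiftOne_zero_apply] at this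
  have hXi : shiftOne i (-a) (X i) = X i - C a := by
    simp [shiftOne, MvPolynomial.algebraMap_eq]
    ring
  rwa [hXi] at this

lemma prod_X_sub_C_dvd (i : Fin n) (s : Finset ℂ) (P : MvPolynomial (Fin n) ℂ)
    (h : ∀ a ∈ s, subC i a P = 0) : (∏ a ∈ s, (X i - C a)) ∣ P := by
  apply Finset.prod_dvd_of_coprime
  · intro a ha b hb hab
    refine ⟨C ((b - a)⁻¹), -C ((b - a)⁻¹), ?_⟩
    have hba : b - a ≠ 0 := sub_ne_zero.2 (Ne.symm hab)
    calc C ((b - a)⁻¹) * (X i - C a) + -C ((b - a)⁻¹) * (X i - C b)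
        = C ((b - a)⁻¹) * (C b - C a) := by ring
      _ = C ((b - a)⁻¹) * C (b - a) := by rw [← C_sub]
      _ = C ((b - a)⁻¹ * (b - a)) := C_mul.symm
      _ = 1 := by rw [inv_mul_cancel₀ hba, C_1]
  · intro a ha
    exact X_sub_C_dvd i a P (h a ha)

lemma support_subC_zero (i : Fin n) (Q : MvPolynomial (Fin n) ℂ) :
    (subC i 0 Q).support ⊆ Q.support := by
  classical
  intro e he
  conv at he => rw [Q.as_sum, map_sum]
  obtain ⟨d, hd, hed⟩ := Finset.mem_biUnion.1 (MvPolynomial.support_sum he)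
  rw [subC_monomial] at hed
  rcases eq_or_ne (d i) 0 with h0 | h0
  · have herase : d.erase i = d := by
      ext j
      rcases eq_or_ne j i with rfl | hji
      · rw [Finsupp.erase_same, h0]
      · rw [Finsupp.erase_ne hji]
    rw [h0, pow_zero, mul_one, herase] at hed
    have := MvPolynomial.support_monomial_subset hed
    rw [Finset.mem_singleton] at this
    rwa [this]
  · rw [zero_pow h0, mul_zero, MvPolynomial.monomial_zero] at hed
    simp at hed

lemma τ_subC (q : Fin n → ℂ) (i : Fin n) (a : ℂ) (P : MvPolynomial (Fin n) ℂ) :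
    τ q (subC i a P) = subC i 0 (τ (Function.update q i a) P) := by
  have : (τ q).comp (subC i a) = (subC i 0).comp (τ (Function.update q i a)) := by
    apply algHom_ext
    intro j
    rcases eq_or_ne j i with rfl | hji
    · simp [τ, subC, MvPolynomial.algebraMap_eq]
    · simp [τ, subC, hji, Function.update_of_ne hji, MvPolynomial.algebraMap_eq]
  exact DFunLike.congr_fun this P

lemma prodf_shape (idx : Fin n) (s : Finset ℂ) :
    (∀ μ ∈ (∏ a ∈ s, (X idx - C a : MvPolynomial (Fin n) ℂ)).support,
        μ = Finsupp.single idx (μ idx) ∧ μ idx ≤ s.card) ∧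
      coeff (Finsupp.single idx s.card) (∏ a ∈ s, (X idx - C a : MvPolynomial (Fin n) ℂ)) = 1 := by
  classical
  induction s using Finset.induction_on with
  | empty =>
    constructor
    · intro μ hμ
      rw [Finset.prod_empty] at hμ
      have h1 := MvPolynomial.mem_support_iff.1 hμ
      rw [MvPolynomial.coeff_one] at h1
      have : μ = 0 := by
        by_contra hc
        exact h1 (if_neg (fun h => hc h.symm))
      subst this
      simp
    · rw [Finset.prod_empty, Finset.card_empty, Finsupp.single_zero, MvPolynomial.coeff_one]
      simp
  | @insert a s ha ih =>
    rw [Finset.prod_insert ha, Finset.card_insert_of_notMem ha]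
    set g := ∏ b ∈ s, (X idx - C b : MvPolynomial (Fin n) ℂ) with hg
    have hco : ∀ μ, coeff μ ((X idx - C a) * g) = coeff μ (X idx * g) - a * coeff μ g := by
      intro μ
      rw [sub_mul, MvPolynomial.coeff_sub, MvPolynomial.coeff_C_mul]
    constructor
    · intro μ hμ
      have hne := MvPolynomial.mem_support_iff.1 hμ
      rw [hco] at hne
      have : coeff μ (X idx * g) ≠ 0 ∨ coeff μ g ≠ 0 := by
        by_contra hc
        push_neg at hc
        rw [hc.1, hc.2, mul_zero, sub_zero] at hne
        exact hne rfl
      rcases this with hx | hgμ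
      · rw [MvPolynomial.coeff_X_mul'] at hx
        have hmem : idx ∈ μ.support := by
          by_contra hc
          rw [if_neg hc] at hx
          exact hx rfl
        rw [if_pos hmem] at hx
        have hIH := (ih.1 _ (MvPolynomial.mem_support_iff.2 hx))
        have hμidx : 1 ≤ μ idx := by
          have := Finsupp.mem_support_iff.1 hmem
          omega
        set ν := μ - Finsupp.single idx 1 with hν
        have happ : ν idx = μ idx - 1 := by
          rw [hν, Finsupp.tsub_apply, Finsupp.single_eq_same]
        constructor
        · ext j
          rcases eq_or_ne j idx with rfl | hji
          · rw [Finsupp.single_eq_same]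
          · have := congrFun (congrArg (fun (f : Fin n →₀ ℕ) => (f : Fin n → ℕ)) hIH.1) j
            rw [Finsupp.single_eq_of_ne' (Ne.symm hji)] at this ⊢
            have h2 : ν j = μ j := by
              simp [hν, Finsupp.tsub_apply, Finsupp.single_eq_of_ne' (Ne.symm hji)]
            omega
        · have := hIH.2
          rw [happ] at this
          omega
      · have hIH := ih.1 _ (MvPolynomial.mem_support_iff.2 hgμ)
        exact ⟨hIH.1, by omega⟩
    · rw [hco, MvPolynomial.coeff_X_mul']
      have hmem : idx ∈ (Finsupp.single idx (s.card + 1)).support := by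
        rw [Finsupp.mem_support_iff, Finsupp.single_eq_same]
        omega
      rw [if_pos hmem]
      have : Finsupp.single idx (s.card + 1) - Finsupp.single idx 1 = Finsupp.single idx s.card := by
        rw [← Finsupp.single_tsub]
        exact congrArg (Finsupp.single idx) (Nat.add_sub_cancel _ _)
      rw [this, ih.2]
      have hnot : coeff (Finsupp.single idx (s.card + 1)) g = 0 := by
        by_contra hc
        have := (ih.1 _ (MvPolynomial.mem_support_iff.2 hc)).2
        rw [Finsupp.single_eq_same] at this
        omega
      rw [hnot, mul_zero, sub_zero]

lemma totalDegree_prodf_mul (idx : Fin n) (s : Finset ℂ) {B : MvPolynomial (Fin n) ℂ}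
    (hB : B ≠ 0) :
    s.card + B.totalDegree
      ≤ ((∏ a ∈ s, (X idx - C a : MvPolynomial (Fin n) ℂ)) * B).totalDegree := by
  classical
  set f := ∏ a ∈ s, (X idx - C a : MvPolynomial (Fin n) ℂ) with hf
  obtain ⟨d, hd, hsum⟩ := Finset.exists_mem_eq_sup B.support
    (Finset.nonempty_iff_ne_empty.2 (mt MvPolynomial.support_eq_empty.1 hB)) (fun d => d.sum fun _ e => e)
  have htd : B.totalDegree = d.sum fun _ e => e := hsum
  set μ := d + Finsupp.single idx s.card with hμ
  have hμcoeff : coeff μ (f * B) = coeff d B := by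
    rw [MvPolynomial.coeff_mul]
    rw [Finset.sum_eq_single ((Finsupp.single idx s.card, d) : (Fin n →₀ ℕ) × (Fin n →₀ ℕ))]
    · rw [(prodf_shape idx s).2, one_mul]
    · rintro ⟨d₁, d₂⟩ hmem hne
      rcases eq_or_ne (coeff d₁ f) 0 with h1 | h1
      · rw [h1, zero_mul]
      rcases eq_or_ne (coeff d₂ B) 0 with h2 | h2
      · rw [h2, mul_zero]
      exfalso
      have hshape := (prodf_shape idx s).1 d₁ (MvPolynomial.mem_support_iff.2 h1)
      have hsum2 : d₁ + d₂ = μ := Finset.HasAntidiagonal.mem_antidiagonal.1 hmem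
      have hs1 : (d₁.sum fun _ e => e) = d₁ idx := by
        conv_lhs => rw [hshape.1]
        exact sum_single idx (d₁ idx)
      have hs2 : (d₂.sum fun _ e => e) ≤ d.sum fun _ e => e := by
        rw [← htd]
        exact le_totalDegree (MvPolynomial.mem_support_iff.2 h2)
      have hsums : (d₁.sum fun _ e => e) + (d₂.sum fun _ e => e)
          = (d.sum fun _ e => e) + s.card := by
        rw [← sum_add, hsum2, hμ, sum_add, sum_single]
      have hidx : d₁ idx = s.card := by omega
      have hd₁ : d₁ = Finsupp.single idx s.card := by rw [hshape.1, hidx]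
      have hd₂ : d₂ = d := by
        have h := hsum2
        rw [hd₁, hμ, add_comm d (Finsupp.single idx s.card)] at h
        exact add_left_cancel h
      exact hne (by rw [hd₁, hd₂])
    · intro hnot
      exact absurd (Finset.HasAntidiagonal.mem_antidiagonal.2 (by rw [hμ, add_comm])) hnot
  have hμmem : μ ∈ (f * B).support := by
    rw [MvPolynomial.mem_support_iff, hμcoeff]
    exact MvPolynomial.mem_support_iff.1 hd
  have := le_totalDegree hμmem
  rw [hμ, sum_add, sum_single, ← htd] at this
  omega

lemma tau_prodf (idx : Fin n) (s : Finset ℂ) (p : Fin n → ℂ) (hp : p idx ∈ s) :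
    ∃ U : MvPolynomial (Fin n) ℂ,
      τ p (∏ a ∈ s, (X idx - C a : MvPolynomial (Fin n) ℂ)) = X idx * U ∧
        constantCoeff U ≠ 0 := by
  refine ⟨∏ a ∈ s.erase (p idx), (X idx + C (p idx - a)), ?_, ?_⟩
  · rw [map_prod]
    have hfac : ∀ a ∈ s, τ p (X idx - C a) = X idx + C (p idx - a) := by
      intro a _
      rw [map_sub, τ, aeval_X, aeval_C, MvPolynomial.algebraMap_eq, map_sub]
      ring
    rw [Finset.prod_congr rfl hfac, ← Finset.mul_prod_erase s _ hp, sub_self, map_zero, add_zero]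
  · rw [map_prod]
    apply Finset.prod_ne_zero_iff.2
    intro a ha
    rw [map_add, constantCoeff_X, constantCoeff_C, zero_add]
    exact sub_ne_zero.2 (Ne.symm (Finset.mem_erase.1 ha).1)

/-- The grid base set `{0, 1, ..., m-1} ⊆ ℂ`. -/
noncomputable def G (m : ℕ) : Finset ℂ := (Finset.range m).image (fun k : ℕ => (k : ℂ))

lemma card_G (m : ℕ) : (G m).card = m := by
  rw [G, Finset.card_image_of_injective _ (fun a b hab => by exact_mod_cast hab),
    Finset.card_range]

/-- The grid of `m^n` points. -/
noncomputable def grid (n m : ℕ) : Finset (Fin n → ℂ) :=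
  Fintype.piFinset (fun _ : Fin n => G m)

lemma grid_nonempty (m : ℕ) (hm : 0 < m) : ∃ p, p ∈ grid n m := by
  refine ⟨fun _ => (0 : ℂ), ?_⟩
  rw [grid, Fintype.mem_piFinset]
  intro _
  rw [G, Finset.mem_image]
  exact ⟨0, Finset.mem_range.2 hm, by norm_num⟩

lemma key (m : ℕ) (hm : 0 < m) :
    ∀ d k : ℕ, k ≤ n → ∀ (l : ℕ) (P : MvPolynomial (Fin n) ℂ), P ≠ 0 →
      P.totalDegree ≤ d →
      (∀ e ∈ P.support, ∀ j : Fin n, k ≤ (j : ℕ) → e j = 0) →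
      (∀ p ∈ grid n m, AllDegGE (τ p P) l) →
      l * m ≤ P.totalDegree := by
  intro d
  induction d using Nat.strong_induction_on with
  | _ d IHd =>
  intro k
  induction k with
  | zero =>
    intro _ l P hP _ hind hord
    rcases Nat.eq_zero_or_pos l with rfl | hl
    · simp
    exfalso
    obtain ⟨p, hp⟩ := grid_nonempty m hm
    have hsupp0 : ∀ e ∈ P.support, e = (0 : Fin n →₀ ℕ) := by
      intro e he
      ext j
      exact hind e he j (Nat.zero_le _)
    have hPC : P = C (coeff 0 P) := by
      ext e
      rcases eq_or_ne e 0 with rfl | he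
      · rw [MvPolynomial.coeff_C, if_pos rfl]
      · rw [MvPolynomial.coeff_C, if_neg (fun hc => he hc.symm)]
        by_contra hc
        exact he (hsupp0 e (MvPolynomial.mem_support_iff.2 hc))
    have hτ : τ p P = C (coeff 0 P) := by
      conv_lhs => rw [hPC]
      rw [τ, aeval_C, MvPolynomial.algebraMap_eq]
    have hc0 : coeff 0 P ≠ 0 := by
      intro hc
      rw [hc, map_zero] at hPC
      exact hP hPC
    have h0mem : (0 : Fin n →₀ ℕ) ∈ (τ p P).support := by
      rw [MvPolynomial.mem_support_iff, hτ, MvPolynomial.coeff_zero_C]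
      exact hc0
    have := hord p hp 0 h0mem
    rw [Finsupp.sum_zero_index] at this
    omega
  | succ k IHk =>
    intro hk1 l P hP hPd hind hord
    have hk : k ≤ n := le_trans (Nat.le_succ k) hk1
    have hkn : k < n := lt_of_lt_of_le (Nat.lt_succ_self k) hk1
    set idx : Fin n := ⟨k, hkn⟩ with hidx
    rcases Nat.eq_zero_or_pos l with rfl | hl
    · simp
    by_cases hcase : ∀ a ∈ G m, subC idx a P = 0
    · obtain ⟨B, hB⟩ := prod_X_sub_C_dvd idx (G m) P hcase
      have hBne : B ≠ 0 := by rintro rfl; rw [mul_zero] at hB; exact hP hB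
      have hdeg : (G m).card + B.totalDegree ≤ P.totalDegree := by
        conv_rhs => rw [hB]
        exact totalDegree_prodf_mul idx (G m) hBne
      rw [card_G] at hdeg
      have hordB : ∀ p ∈ grid n m, AllDegGE (τ p B) (l - 1) := by
        intro p hp
        have hpidx : p idx ∈ G m := by
          rw [grid, Fintype.mem_piFinset] at hp
          exact hp idx
        obtain ⟨U, hU, hUc⟩ := tau_prodf idx (G m) p hpidx
        have h1 : τ p P = X idx * (U * τ p B) := by
          rw [hB, map_mul, hU, mul_assoc]
        have h2 := hord p hp
        rw [h1] at h2
        have h3 : AllDegGE (U * τ p B) (l - 1) := by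
          apply AllDegGE.of_X_mul (i := idx)
          rwa [Nat.sub_add_cancel hl]
        exact AllDegGE.of_unit_mul hUc h3
      have hrec := IHd B.totalDegree (by omega) n le_rfl (l - 1) B hBne le_rfl
        (fun e _ j hj => absurd hj (Nat.not_le.2 j.isLt)) hordB
      have hlm : l * m = (l - 1) * m + m := by
        conv_lhs => rw [← Nat.sub_add_cancel hl]
        ring
      omega
    · push_neg at hcase
      obtain ⟨a, haG, hQ⟩ := hcase
      have hQd : (subC idx a P).totalDegree ≤ d := le_trans (totalDegree_subC_le idx a P) hPd
      have hQind : ∀ e ∈ (subC idx a P).support, ∀ j : Fin n, k ≤ (j : ℕ) → e j = 0 := by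
        intro e he j hj
        obtain ⟨d', hd', rfl⟩ := Finset.mem_image.1 (support_subC idx a P he)
        rcases eq_or_ne j idx with rfl | hji
        · exact Finsupp.erase_same
        · rw [Finsupp.erase_ne hji]
          apply hind d' hd' j
          have : (j : ℕ) ≠ k := fun hc => hji (Fin.ext hc)
          omega
      have hQord : ∀ p ∈ grid n m, AllDegGE (τ p (subC idx a P)) l := by
        intro p hp
        rw [τ_subC]
        have hp' : Function.update p idx a ∈ grid n m := by
          rw [grid, Fintype.mem_piFinset] at hp ⊢
          intro i
          rcases eq_or_ne i idx with rfl | hii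
          · rw [Function.update_self]; exact haG
          · rw [Function.update_of_ne hii]; exact hp i
        intro e he
        exact hord _ hp' e (support_subC_zero idx _ he)
      have := IHk hk l (subC idx a P) hQ hQd hQind hQord
      exact le_trans this (totalDegree_subC_le idx a P)

lemma allDegGE_one {A : MvPolynomial (Fin n) ℂ} (h : constantCoeff A = 0) : AllDegGE A 1 := by
  intro d hd
  by_contra hc
  push_neg at hc
  have hd0 : d = 0 := by
    rw [finsuppSum_eq] at hc
    ext j
    have := Finset.sum_eq_zero_iff.1 (by omega : (∑ i, d i) = 0) j (Finset.mem_univ j)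
    simpa using this
  subst hd0
  have : coeff 0 A = 0 := by
    rw [← MvPolynomial.constantCoeff_eq] at *
    exact h
  exact (MvPolynomial.mem_support_iff.1 hd) this

lemma Omega_grid (hn : 0 < n) (m : ℕ) (hm : 0 < m) (l : ℕ) (hl : 0 < l) :
    Omega (grid n m) l = l * m := by
  set i0 : Fin n := ⟨0, hn⟩
  set f : MvPolynomial (Fin n) ℂ := ∏ a ∈ G m, (X i0 - C a) with hfdef
  have hf1 : coeff (Finsupp.single i0 m) f = 1 := by
    have := (prodf_shape i0 (G m)).2
    rwa [card_G] at this
  have hfne : f ≠ 0 := by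
    intro h
    rw [h, MvPolynomial.coeff_zero] at hf1
    exact zero_ne_one hf1
  have hPne : f ^ l ≠ 0 := pow_ne_zero l hfne
  have hord : ∀ p ∈ grid n m, HasOrderAtLeast (f ^ l) p l := by
    intro p hp
    rw [hasOrderAtLeast_iff, map_pow]
    apply AllDegGE.pow
    obtain ⟨U, hU, _⟩ := tau_prodf i0 (G m) p
      (by rw [grid, Fintype.mem_piFinset] at hp; exact hp i0)
    rw [← hfdef] at hU
    rw [hU]
    apply allDegGE_one
    rw [map_mul, constantCoeff_X, zero_mul]
  have hdeg : (f ^ l).totalDegree ≤ l * m := by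
    refine le_trans (totalDegree_pow f l) ?_
    have hfd : f.totalDegree ≤ m := by
      refine le_trans (totalDegree_finset_prod (G m) _) ?_
      have : ∀ a ∈ G m, (X i0 - C a : MvPolynomial (Fin n) ℂ).totalDegree ≤ 1 := by
        intro a _
        rw [sub_eq_add_neg, ← map_neg]
        refine le_trans (totalDegree_add _ _) ?_
        rw [totalDegree_X, totalDegree_C]
        omega
      refine le_trans (Finset.sum_le_sum this) ?_
      rw [Finset.sum_const, card_G, smul_eq_mul, mul_one]
    exact Nat.mul_le_mul_left l hfd
  have hub : Omega (grid n m) l ≤ (f ^ l).totalDegree :=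
    Nat.sInf_le ⟨f ^ l, hPne, hord, rfl⟩
  have hne_set : {d | ∃ P : MvPolynomial (Fin n) ℂ,
      P ≠ 0 ∧ (∀ p ∈ grid n m, HasOrderAtLeast P p l) ∧ P.totalDegree = d}.Nonempty :=
    ⟨(f ^ l).totalDegree, f ^ l, hPne, hord, rfl⟩
  obtain ⟨P, hP, hPord, hPdeg⟩ := Nat.sInf_mem hne_set
  have hlow : l * m ≤ Omega (grid n m) l := by
    rw [Omega, ← hPdeg]
    exact key m hm P.totalDegree n le_rfl l P hP le_rfl
      (fun e _ j hj => absurd hj (Nat.not_le.2 j.isLt))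
      (fun p hp => (hasOrderAtLeast_iff P p l).1 (hPord p hp))
  have : Omega (grid n m) l ≤ l * m := le_trans hub hdeg
  omega
end Evain

theorem evain_existence {n : ℕ} (hn : 0 < n) (m : ℕ) (hm : 0 < m) :
    ∃ S : Finset (Fin n → ℂ), S.card = m ^ n ∧ singDeg S = (m : ℝ) := by
  refine ⟨Evain.grid n m, ?_, ?_⟩
  · rw [Evain.grid, Fintype.card_piFinset]
    simp [Evain.card_G]
  · have hval : ∀ l : ℕ+, ((Omega (Evain.grid n m) (l : ℕ) : ℝ) / ((l : ℕ) : ℝ)) = (m : ℝ) := by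
      intro l
      rw [Evain.Omega_grid hn m hm (l : ℕ) l.2]
      have hl0 : ((l : ℕ) : ℝ) ≠ 0 := by
        have : (l : ℕ) ≠ 0 := Nat.pos_iff_ne_zero.1 l.2
        exact_mod_cast this
      push_cast
      field_simp
    rw [singDeg]
    calc (⨅ l : ℕ+, ((Omega (Evain.grid n m) (l : ℕ) : ℝ) / ((l : ℕ) : ℝ)))
        = ⨅ _l : ℕ+, (m : ℝ) := by
          congr 1
          funext l
          exact hval l
      _ = (m : ℝ) := ciInf_const
end
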